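/- arXiv:2008.00779 — 4 statements merged into one kernel-verified Lean document; each statement's English description precedes it below -/
import Mathlib

section
/- For every positive integer t and every tree T on at least two vertices, the graph B(T), obtained by replacing every node of T by a clique on t vertices and every edge of T by a perfect matching between the corresponding cliques, has treewidth exactly t. -/
open SimpleGraph

/-- A tree decomposition of a graph `G`. -/
structure TreeDecomp {V : Type} (G : SimpleGraph V) where
  ι : Type
  tree : SimpleGraph ι
  isTree : tree.IsTree
  bag : ι → Finset V
  covers : ∀ v : V, ∃ x, v ∈ bag x
  coversEdge : ∀ ⦃u v : V⦄, G.Adj u v → ∃ x, u ∈ bag x ∧ v ∈ bag x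
  bagConn : ∀ v : V, (tree.induce {x | v ∈ bag x}).Connected

/-- `G` has a tree decomposition of width at most `k` (bags of size at most `k+1`). -/
def TwLE {V : Type} (G : SimpleGraph V) (k : ℕ) : Prop :=
  ∃ D : TreeDecomp G, ∀ x, (D.bag x).card ≤ k + 1

/-- A path decomposition of a graph `G`: a sequence of bags. -/
structure PathDecomp {V : Type} (G : SimpleGraph V) where
  n : ℕ
  bag : Fin n → Finset V
  covers : ∀ v : V, ∃ i, v ∈ bag i
  coversEdge : ∀ ⦃u v : V⦄, G.Adj u v → ∃ i, u ∈ bag i ∧ v ∈ bag i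
  consecutive : ∀ (v : V) (i j k : Fin n), i ≤ j → j ≤ k → v ∈ bag i → v ∈ bag k → v ∈ bag j

/-- `G` has a path decomposition of width at most `k` (bags of size at most `k+1`). -/
def PwLE {V : Type} (G : SimpleGraph V) (k : ℕ) : Prop :=
  ∃ P : PathDecomp G, ∀ i, (P.bag i).card ≤ k + 1

/-- A copy of a subdivision of the tree `T` inside the graph `G`:
branch vertices `φ x`, and for each edge of `T` a path of `G` between the
corresponding branch vertices, internally disjoint from all branch vertices
and from the paths of all other edges. -/
structure SubdivCopy {α V : Type} (T : SimpleGraph α) (G : SimpleGraph V) where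
  φ : α → V
  inj : Function.Injective φ
  path : ∀ ⦃x y : α⦄, T.Adj x y → G.Walk (φ x) (φ y)
  isPath : ∀ ⦃x y : α⦄ (h : T.Adj x y), (path h).IsPath
  branch : ∀ ⦃x y : α⦄ (h : T.Adj x y) (z : α), φ z ∈ (path h).support → z = x ∨ z = y
  disj : ∀ ⦃x y x' y' : α⦄ (h : T.Adj x y) (h' : T.Adj x' y'),
    ({x, y} : Set α) ≠ {x', y'} →
    ∀ v, v ∈ (path h).support → v ∈ (path h').support →
      v ∈ φ '' (({x, y} : Set α) ∩ {x', y'})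

/-- The set of vertices used by a subdivision copy. -/
def SubdivCopy.supp {α V : Type} {T : SimpleGraph α} {G : SimpleGraph V}
    (c : SubdivCopy T G) : Set V :=
  Set.range c.φ ∪ {v | ∃ x y, ∃ h : T.Adj x y, v ∈ (c.path h).support}

/-- `G` contains a subdivision of `T` as a subgraph. -/
def ContainsSubdiv {α V : Type} (T : SimpleGraph α) (G : SimpleGraph V) : Prop :=
  Nonempty (SubdivCopy T G)

/-- `S` is (isomorphic to) a subdivision of `T`: a subdivision copy of `T`
using all vertices and all edges of `S`. -/
def IsSubdivisionOf {α W : Type} (T : SimpleGraph α) (S : SimpleGraph W) : Prop :=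
  ∃ c : SubdivCopy T S, c.supp = Set.univ ∧
    ∀ ⦃u w : W⦄, S.Adj u w → ∃ x y, ∃ h : T.Adj x y, s(u, w) ∈ (c.path h).edges

/-- The complete binary tree of height `h`, as a simple graph: vertices are
binary strings of length at most `h`, with edges between a string and its
one-letter extensions. -/
def CBT (h : ℕ) : SimpleGraph {l : List Bool // l.length ≤ h} :=
  SimpleGraph.fromRel (fun x y => ∃ b, y.val = b :: x.val)

/-- The root of the complete binary tree. -/
def CBTroot (h : ℕ) : {l : List Bool // l.length ≤ h} := ⟨[], by simp⟩

/-- The complete ternary tree of height `h`, as a simple graph. -/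
def CTT (h : ℕ) : SimpleGraph {l : List (Fin 3) // l.length ≤ h} :=
  SimpleGraph.fromRel (fun x y => ∃ b, y.val = b :: x.val)

/-- The root of the complete ternary tree. -/
def CTTroot (h : ℕ) : {l : List (Fin 3) // l.length ≤ h} := ⟨[], by simp⟩

/-- There are `a ∈ A` and `b ∈ B` joined by a walk of `G` avoiding `C`. -/
def LinkedAvoiding {V : Type} (G : SimpleGraph V) (A B C : Set V) : Prop :=
  ∃ a ∈ A, ∃ b ∈ B, ∃ p : G.Walk a b, ∀ x ∈ p.support, x ∉ C

/-- The classes `𝒯_h`: `InT 0 G` iff `G` is connected (hence non-empty);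
`InT (h+1) G` iff `G` is connected and has three pairwise disjoint vertex sets
inducing graphs in `𝒯_h`, any two of which are linked by a path avoiding the third. -/
def InTAux : ℕ → (V : Type) → SimpleGraph V → Prop
  | 0, _, G => G.Connected
  | h + 1, V, G => G.Connected ∧ ∃ V₁ V₂ V₃ : Set V,
      Disjoint V₁ V₂ ∧ Disjoint V₁ V₃ ∧ Disjoint V₂ V₃ ∧
      InTAux h V₁ (G.induce V₁) ∧ InTAux h V₂ (G.induce V₂) ∧ InTAux h V₃ (G.induce V₃) ∧
      LinkedAvoiding G V₁ V₂ V₃ ∧ LinkedAvoiding G V₁ V₃ V₂ ∧ LinkedAvoiding G V₂ V₃ V₁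

def InT (h : ℕ) {V : Type} (G : SimpleGraph V) : Prop := InTAux h V G

namespace TwAux

variable {V : Type*} {T : SimpleGraph V}

noncomputable def upath (hT : T.IsTree) (a b : V) : T.Walk a b :=
  (hT.existsUnique_path a b).exists.choose

lemma upath_isPath (hT : T.IsTree) (a b : V) : (upath hT a b).IsPath :=
  (hT.existsUnique_path a b).exists.choose_spec

lemma upath_eq (hT : T.IsTree) {a b : V} (p : T.Walk a b) (hp : p.IsPath) :
    p = upath hT a b := by
  obtain ⟨q, hq, hu⟩ := hT.existsUnique_path a b
  rw [hu p hp, hu _ (upath_isPath hT a b)]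

lemma upath_self (hT : T.IsTree) (a : V) : upath hT a a = Walk.nil :=
  (upath_eq hT Walk.nil Walk.IsPath.nil).symm

lemma upath_reverse (hT : T.IsTree) (a b : V) :
    (upath hT a b).reverse = upath hT b a :=
  upath_eq hT _ ((upath_isPath hT a b).reverse)

lemma upath_support_subset (hT : T.IsTree) {a b : V} (w : T.Walk a b) :
    (upath hT a b).support ⊆ w.support := by
  classical
  rw [← upath_eq hT w.bypass w.bypass_isPath]
  exact w.support_bypass_subset

/-- Parent of a vertex with respect to a root. -/
noncomputable def par (hT : T.IsTree) (r x : V) : V := (upath hT x r).getVert 1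

/-- Depth of a vertex with respect to a root. -/
noncomputable def dep (hT : T.IsTree) (r x : V) : ℕ := (upath hT x r).length

lemma dep_eq_zero (hT : T.IsTree) {r x : V} (h : dep hT r x = 0) : x = r := by
  unfold dep at h
  cases hp : upath hT x r with
  | nil => rfl
  | cons h' q => rw [hp] at h; simp [Walk.length_cons] at h

lemma par_spec (hT : T.IsTree) {r x : V} (hx : x ≠ r) :
    T.Adj x (par hT r x) ∧ dep hT r (par hT r x) + 1 = dep hT r x := by
  cases hp : upath hT x r with
  | nil => exact absurd rfl hx
  | @cons _ y _ h' q =>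
    have hq : q.IsPath := by
      have := upath_isPath hT x r
      rw [hp] at this
      exact this.of_cons
    have hqe : q = upath hT y r := upath_eq hT q hq
    have hpar : par hT r x = y := by
      unfold par; rw [hp]; simp [Walk.getVert_cons_succ, Walk.getVert_zero]
    rw [hpar]
    constructor
    · rw [← hpar] at h' ⊢; rw [hpar] at h' ⊢; exact h'
    · unfold dep; rw [hp, ← hqe]; simp [Walk.length_cons]

lemma adj_par_or (hT : T.IsTree) (r : V) {x y : V} (h : T.Adj x y) :
    (x ≠ r ∧ par hT r x = y) ∨ (y ≠ r ∧ par hT r y = x) := by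
  classical
  by_cases hy : y ∈ (upath hT x r).support
  · -- x side: y is on the path from x to r, in fact the second vertex
    left
    have hxr : x ≠ r := by
      rintro rfl
      rw [upath_self hT x] at hy
      exact h.ne (Walk.mem_support_nil_iff.mp hy).symm
    refine ⟨hxr, ?_⟩
    set Q := (upath hT x r).dropUntil y hy with hQ
    have hQpath : Q.IsPath := (upath_isPath hT x r).dropUntil hy
    have hxQ : x ∉ Q.support := by
      intro hxQ
      have hnodup := (upath_isPath hT x r).support_nodup
      rw [← Walk.take_spec (upath hT x r) hy] at hnodup
      rw [Walk.support_append] at hnodup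
      have hxtake : x ∈ ((upath hT x r).takeUntil y hy).support := Walk.start_mem_support _
      have hxy : x ≠ y := h.ne
      have hxtail : x ∈ Q.support.tail := by
        have : Q.support = y :: Q.support.tail := Q.support_eq_cons
        rw [this] at hxQ
        rcases List.mem_cons.mp hxQ with h1 | h1
        · exact absurd h1 hxy
        · exact h1
      exact (List.disjoint_of_nodup_append hnodup) hxtake hxtail
    have hW : (Walk.cons h Q).IsPath := hQpath.cons hxQ
    have := upath_eq hT (Walk.cons h Q) hW
    unfold par
    rw [← this]
    simp [Walk.getVert_cons_succ, Walk.getVert_zero]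
  · -- y side
    right
    have hW : (Walk.cons h.symm (upath hT x r)).IsPath :=
      (upath_isPath hT x r).cons hy
    have hyr : y ≠ r := by
      rintro rfl
      exact hy (Walk.end_mem_support _)
    refine ⟨hyr, ?_⟩
    have := upath_eq hT (Walk.cons h.symm (upath hT x r)) hW
    unfold par
    rw [← this]
    simp [Walk.getVert_cons_succ, Walk.getVert_zero]



variable {σ : Type*}

/-- The graph generated by a parent map. -/
def parentGraph (P : σ → σ) (root : σ) : SimpleGraph σ :=
  SimpleGraph.fromRel (fun a b => a ≠ root ∧ b = P a)

lemma parentGraph_adj {P : σ → σ} {root : σ} {d : σ → ℕ}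
    (hd : ∀ a, a ≠ root → d (P a) < d a) {a : σ} (ha : a ≠ root) :
    (parentGraph P root).Adj a (P a) := by
  refine ⟨fun h => ?_, Or.inl ⟨ha, rfl⟩⟩
  have := hd a ha
  rw [← h] at this
  omega

lemma parentGraph_isTree (P : σ → σ) (root : σ) (d : σ → ℕ)
    (hd : ∀ a, a ≠ root → d (P a) < d a) :
    (parentGraph P root).IsTree := by
  have hreach : ∀ a : σ, (parentGraph P root).Reachable a root := by
    have key : ∀ n a, d a = n → (parentGraph P root).Reachable a root := by
      intro n
      induction n using Nat.strong_induction_on with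
      | _ n ih =>
        intro a hn
        by_cases ha : a = root
        · exact ha ▸ Reachable.refl a
        · exact ((parentGraph_adj hd ha).reachable).trans
            (ih (d (P a)) (hn ▸ hd a ha) (P a) rfl)
    exact fun a => key (d a) a rfl
  haveI : Nonempty σ := ⟨root⟩
  classical
  constructor
  · exact ⟨fun a b => (hreach a).trans (hreach b).symm⟩
  · -- acyclicity
    intro v c hc
    have hsupne : c.support ≠ [] := c.support_ne_nil
    obtain ⟨m, hm⟩ : ∃ m, m ∈ c.support.argmax d := by
      cases h : c.support.argmax d with
      | none => exact absurd (List.argmax_eq_none.mp h) hsupne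
      | some m => exact ⟨m, by simp [h]⟩
    have hmmem : m ∈ c.support := List.argmax_mem hm
    have hmax : ∀ b ∈ c.support, d b ≤ d m := fun b hb => List.le_of_mem_argmax hb hm
    set c' := c.rotate m hmmem with hc'def
    have hc' : c'.IsCycle := hc.rotate hmmem
    have hsup : ∀ b ∈ c'.support, d b ≤ d m := by
      intro x hx
      rw [c'.support_eq_cons] at hx
      rcases List.mem_cons.mp hx with rfl | hx
      · exact le_refl _
      · exact hmax x (List.mem_of_mem_tail
          (((Walk.support_rotate c m hmmem).mem_iff).mp hx))
    clear_value c'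
    cases c' with
    | nil => exact hc'.ne_nil rfl
    | @cons _ b _ hadj q =>
      have h3 := hc'.three_le_length
      rw [Walk.length_cons] at h3
      cases hq : q.reverse with
      | nil =>
        have : q.length = 0 := by
          have := congrArg Walk.length hq
          simpa [Walk.length_reverse] using this
        omega
      | @cons _ y _ hadj2 q2 =>
        have hymem : y ∈ q.support := by
          have : y ∈ q.reverse.support := by rw [hq]; simp
          rwa [Walk.support_reverse, List.mem_reverse] at this
        have hbmem : b ∈ (Walk.cons hadj q).support := by simp
        have hymem' : y ∈ (Walk.cons hadj q).support := by simp [hymem]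
        have hPm : ∀ u : σ, (parentGraph P root).Adj m u → u ∈ (Walk.cons hadj q).support →
            u = P m := by
          intro u hu humem
          rcases hu with ⟨hne, h | h⟩
          · exact h.2
          · exfalso
            have h1 := hd u h.1
            rw [← h.2] at h1
            have h2 := hsup u humem
            omega
        have hb : b = P m := hPm b hadj hbmem
        have hy : y = P m := hPm y hadj2 hymem'
        have hedge : s(m, y) ∈ q.edges := by
          have : s(m, y) ∈ q.reverse.edges := by rw [hq]; simp
          rwa [Walk.edges_reverse, List.mem_reverse] at this
        have hnodup := hc'.edges_nodup
        rw [Walk.edges_cons] at hnodup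
        have hyb : y = b := hy.trans hb.symm
        rw [hyb] at hedge
        exact (List.nodup_cons.mp hnodup).1 hedge


variable {σ : Type*}

lemma induce_connected_of_descent (D : SimpleGraph σ) (S : Set σ) (c : σ) (hc : c ∈ S)
    (f : σ → ℕ) (h : ∀ a ∈ S, a ≠ c → ∃ b ∈ S, D.Adj a b ∧ f b < f a) :
    (D.induce S).Connected := by
  have key : ∀ n (a : σ) (ha : a ∈ S), f a = n →
      (D.induce S).Reachable ⟨a, ha⟩ ⟨c, hc⟩ := by
    intro n
    induction n using Nat.strong_induction_on with
    | _ n ih =>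
      intro a ha hn
      by_cases hac : a = c
      · subst hac; rfl
      · obtain ⟨b, hb, hadj, hlt⟩ := h a ha hac
        have hadj' : (D.induce S).Adj ⟨a, ha⟩ ⟨b, hb⟩ := hadj
        exact hadj'.reachable.trans (ih (f b) (hn ▸ hlt) b hb rfl)
  have : Nonempty S := ⟨⟨c, hc⟩⟩
  exact ⟨fun a b => (key (f a.1) a.1 a.2 rfl).trans (key (f b.1) b.1 b.2 rfl).symm⟩


/-- list helper: last element satisfying S, with nothing after it satisfying S. -/
lemma exists_last_sat {α : Type*} (S : α → Prop) :
    ∀ (l : List α), (∃ u ∈ l, S u) → ∃ l₁ m l₂, l = l₁ ++ m :: l₂ ∧ S m ∧ ∀ u ∈ l₂, ¬ S u := by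
  classical
  intro l
  induction l with
  | nil => rintro ⟨u, hu, _⟩; simp at hu
  | cons a l ih =>
    intro hex
    by_cases hex' : ∃ u ∈ l, S u
    · obtain ⟨l₁, m, l₂, heq, hm, hafter⟩ := ih hex'
      exact ⟨a :: l₁, m, l₂, by rw [heq]; rfl, hm, hafter⟩
    · obtain ⟨u, hu, hSu⟩ := hex
      rcases List.mem_cons.mp hu with rfl | hu
      · exact ⟨[], u, l, rfl, hSu, fun v hv hSv => hex' ⟨v, hv, hSv⟩⟩
      · exact absurd ⟨u, hu, hSu⟩ hex'

lemma split_unique {α : Type*} : ∀ (l₁ : List α) (l₃ : List α) {l₂ l₄ : List α} {m : α},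
    l₁ ++ m :: l₂ = l₃ ++ m :: l₄ → m ∉ l₁ → m ∉ l₃ → l₂ = l₄ := by
  intro l₁
  induction l₁ with
  | nil =>
    intro l₃ l₂ l₄ m h hm1 hm3
    cases l₃ with
    | nil => simpa using h
    | cons c l₃ =>
      simp only [List.nil_append, List.cons_append, List.cons.injEq] at h
      exact absurd (h.1 ▸ List.mem_cons_self (a := c) (l := l₃)) (by simpa [h.1] using hm3)
  | cons a l₁ ih =>
    intro l₃ l₂ l₄ m h hm1 hm3
    cases l₃ with
    | nil =>
      simp only [List.nil_append, List.cons_append, List.cons.injEq] at h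
      exact absurd (h.1.symm ▸ List.mem_cons_self (a := a) (l := l₁)) (by simpa [← h.1] using hm1)
    | cons c l₃ =>
      simp only [List.cons_append, List.cons.injEq] at h
      exact ih l₃ h.2 (fun hh => hm1 (List.mem_cons_of_mem a hh))
        (fun hh => hm3 (List.mem_cons_of_mem c hh))

/-- The median of three vertices in a tree. -/
lemma median (hT : T.IsTree) (a b c : V) :
    ∃ m, m ∈ (upath hT a b).support ∧ m ∈ (upath hT a c).support ∧
      m ∈ (upath hT b c).support := by
  classical
  set p := upath hT a b with hp
  set q := upath hT a c with hq
  have hpP : p.IsPath := upath_isPath hT a b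
  have hqP : q.IsPath := upath_isPath hT a c
  obtain ⟨l₁, m, l₂, heq, hmS, hafter⟩ :=
    exists_last_sat (fun u => u ∈ q.support) p.support
      ⟨a, p.start_mem_support, q.start_mem_support⟩
  have hmp : m ∈ p.support := by rw [heq]; simp
  have hmq : m ∈ q.support := hmS
  -- l₂ is the tail of the support of p.dropUntil m
  have hsplit : p.support =
      ((p.takeUntil m hmp).support).dropLast ++ m :: (p.dropUntil m hmp).support.tail := by
    conv_lhs => rw [← Walk.take_spec p hmp]
    rw [Walk.support_append]
    have h1 : (p.takeUntil m hmp).support.getLast (by simp) = m :=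
      Walk.getLast_support _
    conv_lhs => rw [← List.dropLast_append_getLast
      (l := (p.takeUntil m hmp).support) (by simp), h1]
    simp only [List.append_assoc, List.singleton_append]
  have hml1 : m ∉ l₁ := by
    have hnodup : p.support.Nodup := hpP.support_nodup
    rw [heq] at hnodup
    intro hin
    exact (List.disjoint_of_nodup_append hnodup) hin (List.mem_cons_self (a := m) (l := l₂))
  have hmdl : m ∉ ((p.takeUntil m hmp).support).dropLast := by
    have hcount := Walk.count_support_takeUntil_eq_one p hmp
    intro hin
    have : (p.takeUntil m hmp).support =
        ((p.takeUntil m hmp).support).dropLast ++ [m] := by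
      conv_lhs => rw [← List.dropLast_append_getLast
        (l := (p.takeUntil m hmp).support) (by simp), Walk.getLast_support]
    rw [this, List.count_append] at hcount
    have h2 : 0 < List.count m (((p.takeUntil m hmp).support).dropLast) :=
      List.count_pos_iff.mpr hin
    have h3 : List.count m [m] = 1 := by simp
    omega
  have hl2 : l₂ = (p.dropUntil m hmp).support.tail :=
    split_unique l₁ _ (heq ▸ hsplit) hml1 hmdl
  -- key: in dropUntil's support, only m is in q.support
  have hkey : ∀ u ∈ (p.dropUntil m hmp).support, u ∈ q.support → u = m := by
    intro u hu huq
    rcases List.mem_cons.mp ((p.dropUntil m hmp).support_eq_cons ▸ hu) with h | h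
    · exact h
    · exact absurd huq (hafter u (hl2 ▸ h))
  -- build the walk from b to c through m
  set W := ((p.dropUntil m hmp).reverse.append (q.dropUntil m hmq)) with hW
  have hWpath : W.IsPath := by
    rw [Walk.isPath_def, hW, Walk.support_append, Walk.support_reverse]
    refine List.Nodup.append ?_ ?_ ?_
    · exact List.nodup_reverse.mpr (hpP.dropUntil hmp).support_nodup
    · have := (hqP.dropUntil hmq).support_nodup
      rw [(q.dropUntil m hmq).support_eq_cons] at this
      exact this.of_cons
    · intro u hu hu2
      rw [List.mem_reverse] at hu
      have huq : u ∈ q.support := (q.support_dropUntil_subset hmq)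
        (List.mem_of_mem_tail hu2)
      rw [hkey u hu huq] at hu2
      have hnd := (hqP.dropUntil hmq).support_nodup
      rw [(q.dropUntil m hmq).support_eq_cons] at hnd
      exact (List.nodup_cons.mp hnd).1 hu2
  have hWm : m ∈ W.support := by
    rw [hW, Walk.mem_support_append_iff]
    exact Or.inl (by rw [Walk.support_reverse, List.mem_reverse]; exact Walk.start_mem_support _)
  have := upath_eq hT W hWpath
  exact ⟨m, hmp, hmq, by rw [← this]; exact hWm⟩

/-- Path-closed subsets of a tree. -/
def PathClosed (hT : T.IsTree) (W : Set V) : Prop :=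
  ∀ p ∈ W, ∀ q ∈ W, ∀ s ∈ (upath hT p q).support, s ∈ W

lemma pathClosed_inter {hT : T.IsTree} {A B : Set V} (hA : PathClosed hT A)
    (hB : PathClosed hT B) : PathClosed hT (A ∩ B) :=
  fun p hp q hq s hs => ⟨hA p hp.1 q hq.1 s hs, hB p hp.2 q hq.2 s hs⟩

lemma helly3 (hT : T.IsTree) {A B C : Set V} (hA : PathClosed hT A) (hB : PathClosed hT B)
    (hC : PathClosed hT C) (hAB : (A ∩ B).Nonempty) (hAC : (A ∩ C).Nonempty)
    (hBC : (B ∩ C).Nonempty) : (A ∩ B ∩ C).Nonempty := by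
  obtain ⟨c, hcA, hcB⟩ := hAB
  obtain ⟨b, hbA, hbC⟩ := hAC
  obtain ⟨a, haB, haC⟩ := hBC
  obtain ⟨m, h1, h2, h3⟩ := median hT c b a
  exact ⟨m, ⟨⟨hA c hcA b hbA m h1, hB c hcB a haB m h2⟩, hC b hbC a haC m h3⟩⟩

lemma helly_list (hT : T.IsTree) :
    ∀ (L : List (Set V)), (∀ W ∈ L, PathClosed hT W) →
      (∀ A ∈ L, ∀ B ∈ L, (A ∩ B).Nonempty) → L ≠ [] → ∃ p, ∀ W ∈ L, p ∈ W := by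
  have key : ∀ (n : ℕ) (L : List (Set V)), L.length = n →
      (∀ W ∈ L, PathClosed hT W) → (∀ A ∈ L, ∀ B ∈ L, (A ∩ B).Nonempty) →
      L ≠ [] → ∃ p, ∀ W ∈ L, p ∈ W := by
    intro n
    induction n using Nat.strong_induction_on with
    | _ n ih =>
      intro L hlen hPC hint hne
      cases L with
      | nil => exact absurd rfl hne
      | cons A L' =>
        cases L' with
        | nil =>
          obtain ⟨p, hp, _⟩ := hint A (by simp) A (by simp)
          exact ⟨p, by simpa using hp⟩
        | cons B L'' =>
          have hn : n = L''.length + 2 := by simpa using hlen.symm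
          have hstep := ih (n - 1) (by omega) ((A ∩ B) :: L'') (by simp; omega)
          have hPC' : ∀ W ∈ (A ∩ B) :: L'', PathClosed hT W := by
            intro W hW
            rcases List.mem_cons.mp hW with rfl | hW
            · exact pathClosed_inter (hPC A (by simp)) (hPC B (by simp))
            · exact hPC W (by simp [hW])
          have hint' : ∀ C ∈ (A ∩ B) :: L'', ∀ D ∈ (A ∩ B) :: L'', (C ∩ D).Nonempty := by
            have hABC : ∀ C ∈ L'', ((A ∩ B) ∩ C).Nonempty := by
              intro C hC
              exact helly3 hT (hPC A (by simp)) (hPC B (by simp)) (hPC C (by simp [hC]))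
                (hint A (by simp) B (by simp)) (hint A (by simp) C (by simp [hC]))
                (hint B (by simp) C (by simp [hC]))
            intro C hC D hD
            rcases List.mem_cons.mp hC with rfl | hC <;>
              rcases List.mem_cons.mp hD with rfl | hD
            · simpa [Set.inter_assoc] using hint A (by simp) B (by simp)
            · exact (hABC D hD).mono (Set.inter_subset_inter_left _ (fun z hz => hz))
            · obtain ⟨z, hz1, hz2⟩ := hABC C hC
              exact ⟨z, hz2, hz1⟩
            · exact hint C (by simp [hC]) D (by simp [hD])
          obtain ⟨p, hp⟩ := hstep hPC' hint' (by simp)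
          refine ⟨p, ?_⟩
          intro W hW
          rcases List.mem_cons.mp hW with rfl | hW
          · exact (hp (W ∩ B) (by simp)).1
          · rcases List.mem_cons.mp hW with rfl | hW
            · exact (hp (A ∩ W) (by simp)).2
            · exact hp W (by simp [hW])
  exact fun L => key L.length L rfl


lemma card_filter_le (t k : ℕ) :
    ((Finset.univ : Finset (Fin t)).filter (fun a => a.val ≤ k)).card ≤ k + 1 := by
  classical
  have h := Finset.card_le_card_of_injOn (f := fun a : Fin t => a.val)
    (s := (Finset.univ : Finset (Fin t)).filter (fun a => a.val ≤ k))
    (t := Finset.range (k+1))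
    (by intro a ha; simp at ha ⊢; omega)
    (by intro a _ b _ hab; exact Fin.ext hab)
  simpa using h

lemma card_filter_ge (t k : ℕ) :
    ((Finset.univ : Finset (Fin t)).filter (fun a => k ≤ a.val)).card ≤ t - k := by
  classical
  have h := Finset.card_le_card_of_injOn (f := fun a : Fin t => a.val - k)
    (s := (Finset.univ : Finset (Fin t)).filter (fun a => k ≤ a.val))
    (t := Finset.range (t - k))
    (by intro a ha; simp at ha ⊢; omega)
    (by intro a ha b hb hab
        simp at ha hb
        have hab' : (a : ℕ) - k = (b : ℕ) - k := hab
        exact Fin.ext (by omega))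
  simpa using h

lemma twle_upper (t : ℕ) (ht : 1 ≤ t) {ι : Type} (τ : SimpleGraph ι) (hτ : τ.IsTree)
    (M : ∀ ⦃x y⦄, τ.Adj x y → (Fin t ≃ Fin t))
    (hM : ∀ ⦃x y⦄ (hxy : τ.Adj x y), M hxy.symm = (M hxy).symm)
    (G : SimpleGraph (ι × Fin t))
    (hG : ∀ a b, G.Adj a b ↔
      (a.1 = b.1 ∧ a.2 ≠ b.2) ∨ ∃ hxy : τ.Adj a.1 b.1, M hxy a.2 = b.2) :
    TwLE G t := by
  classical
  obtain ⟨r⟩ : Nonempty ι := hτ.isConnected.nonempty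
  have hpadj : ∀ x : ι, x ≠ r → τ.Adj x (par hτ r x) := fun x hx => (par_spec hτ hx).1
  have hdep : ∀ x : ι, x ≠ r → dep hτ r (par hτ r x) + 1 = dep hτ r x :=
    fun x hx => (par_spec hτ hx).2
  set pr : ι → ι := par hτ r with hpr
  set mch : ι → Fin t → Fin t :=
    fun x a => if h : x = r then a else M (hpadj x h) a with hmch
  set Kx : ι → Finset (ι × Fin t) :=
    fun x => Finset.univ.image (fun a : Fin t => (x, a)) with hKx
  have hKmem : ∀ (x z : ι) (a : Fin t), (z, a) ∈ Kx x ↔ z = x := by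
    intro x z a
    simp only [hKx, Finset.mem_image, Finset.mem_univ, true_and, Prod.mk.injEq]
    constructor
    · rintro ⟨c, h1, h2⟩; exact h1.symm
    · rintro rfl; exact ⟨a, rfl, rfl⟩
  have hKcard : ∀ x : ι, (Kx x).card = t := by
    intro x
    rw [hKx]
    rw [Finset.card_image_of_injective _ (fun a b hab => by simpa using hab)]
    simp
  set P : ι × Fin (t+1) → ι × Fin (t+1) :=
    fun s => if h : s.2.val < t then (s.1, ⟨s.2.val + 1, by omega⟩)
      else (pr s.1, ⟨0, by omega⟩) with hP
  set root : ι × Fin (t+1) := (r, ⟨t, by omega⟩) with hroot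
  set dd : ι × Fin (t+1) → ℕ :=
    fun s => (t+1) * dep hτ r s.1 + (t - s.2.val) with hdd
  have hd : ∀ a, a ≠ root → dd (P a) < dd a := by
    rintro ⟨x, i⟩ ha
    have hilt := i.isLt
    by_cases hi : i.val < t
    · have hPx : P (x, i) = (x, ⟨i.val + 1, by omega⟩) := by
        simp only [hP]; rw [dif_pos hi]
      rw [hPx]
      simp only [hdd]
      omega
    · have hit : i.val = t := by omega
      have hxr : x ≠ r := by
        rintro rfl
        exact ha (by rw [hroot, Prod.mk.injEq]; exact ⟨rfl, Fin.ext hit⟩)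
      have hPx : P (x, i) = (pr x, ⟨0, by omega⟩) := by
        simp only [hP]; rw [dif_neg hi]
      rw [hPx]
      simp only [hdd]
      have hdx := hdep x hxr
      rw [← hdx, Nat.mul_add, Nat.mul_one]
      set E := (t+1) * dep hτ r (pr x) with hE
      omega
  set DD := parentGraph P root with hDD
  have hDDtree := parentGraph_isTree P root dd hd
  have hadjP : ∀ a, a ≠ root → DD.Adj a (P a) := fun a ha => parentGraph_adj hd ha
  set bag : ι × Fin (t+1) → Finset (ι × Fin t) := fun s =>
    if s.2.val = 0 ∨ s.1 = r then Kx s.1 else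
      ((Finset.univ.filter (fun a : Fin t => s.2.val - 1 ≤ a.val)).image
        (fun a => (s.1, a))) ∪
      ((Finset.univ.filter (fun a : Fin t => a.val ≤ s.2.val - 1)).image
        (fun a => (pr s.1, mch s.1 a))) with hbag
  have hbag1 : ∀ (x : ι) (i : Fin (t+1)) (v : ι × Fin t), (i.val = 0 ∨ x = r) →
      (v ∈ bag (x, i) ↔ v.1 = x) := by
    rintro x i ⟨v1, v2⟩ hcond
    simp only [hbag]
    rw [if_pos hcond]
    exact hKmem x v1 v2
  have hbag2 : ∀ (x : ι) (i : Fin (t+1)) (v : ι × Fin t), ¬(i.val = 0 ∨ x = r) →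
      (v ∈ bag (x, i) ↔ ((v.1 = x ∧ i.val - 1 ≤ v.2.val) ∨
        ∃ a : Fin t, a.val ≤ i.val - 1 ∧ v = (pr x, mch x a))) := by
    rintro x i ⟨v1, v2⟩ hcond
    simp only [hbag]
    rw [if_neg hcond]
    simp only [Finset.mem_union, Finset.mem_image, Finset.mem_filter,
      Finset.mem_univ, true_and]
    constructor
    · rintro (⟨a, ha, heq⟩ | ⟨a, ha, heq⟩)
      · rw [Prod.mk.injEq] at heq
        exact Or.inl ⟨heq.1.symm, by rw [← heq.2]; exact ha⟩
      · exact Or.inr ⟨a, ha, heq.symm⟩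
    · rintro (⟨h1, h2⟩ | ⟨a, ha, heq⟩)
      · exact Or.inl ⟨v2, h2, by rw [h1]⟩
      · exact Or.inr ⟨a, ha, heq.symm⟩
  refine ⟨⟨(ι × Fin (t+1)), DD, hDDtree, bag, ?_, ?_, ?_⟩, ?_⟩
  · -- covers
    intro v
    exact ⟨(v.1, ⟨0, by omega⟩), (hbag1 v.1 ⟨0, by omega⟩ v (Or.inl rfl)).mpr rfl⟩
  · -- coversEdge
    rintro ⟨x, a⟩ ⟨y, b⟩ huv
    rw [hG] at huv
    rcases huv with ⟨h1, _⟩ | ⟨hxy0, hMx0⟩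
    · exact ⟨(x, ⟨0, by omega⟩), (hbag1 _ _ _ (Or.inl rfl)).mpr rfl,
        (hbag1 _ _ _ (Or.inl rfl)).mpr h1.symm⟩
    · have hxy : τ.Adj x y := hxy0
      have hMx : M hxy a = b := hMx0
      rcases adj_par_or hτ r hxy with ⟨hur, hpu⟩ | ⟨hvr, hpv⟩
      · -- x ≠ r, pr x = y
        have hb : mch x a = b := by
          simp only [hmch]
          rw [dif_neg hur]
          have hrw : ∀ (h : τ.Adj x (pr x)), M h a = b := by
            rw [show pr x = y from hpu]
            intro h
            exact hMx
          exact hrw _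
        have hane : ¬((⟨a.val + 1, by omega⟩ : Fin (t+1)).val = 0 ∨ x = r) := by
          simp [hur]
        refine ⟨(x, ⟨a.val + 1, by omega⟩), ?_, ?_⟩
        · rw [hbag2 _ _ _ hane]
          exact Or.inl ⟨rfl, by simp⟩
        · rw [hbag2 _ _ _ hane]
          refine Or.inr ⟨a, by simp, ?_⟩
          rw [Prod.mk.injEq]
          exact ⟨hpu.symm, hb.symm⟩
      · -- y ≠ r, pr y = x
        have hb : mch y b = a := by
          simp only [hmch]
          rw [dif_neg hvr]
          have hrw : ∀ (h : τ.Adj y (pr y)), M h b = a := by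
            rw [show pr y = x from hpv]
            intro h
            show (M hxy.symm) b = a
            rw [hM hxy, ← hMx]
            exact Equiv.symm_apply_apply _ _
          exact hrw _
        have hane : ¬((⟨b.val + 1, by omega⟩ : Fin (t+1)).val = 0 ∨ y = r) := by
          simp [hvr]
        refine ⟨(y, ⟨b.val + 1, by omega⟩), ?_, ?_⟩
        · rw [hbag2 _ _ _ hane]
          refine Or.inr ⟨b, by simp, ?_⟩
          rw [Prod.mk.injEq]
          exact ⟨hpv.symm, hb.symm⟩
        · rw [hbag2 _ _ _ hane]
          exact Or.inl ⟨rfl, by simp⟩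
  · -- bagConn
    rintro ⟨x₀, b⟩
    apply induce_connected_of_descent DD _ (x₀, (⟨0, by omega⟩ : Fin (t+1)))
      ((hbag1 x₀ ⟨0, by omega⟩ (x₀, b) (Or.inl rfl)).mpr rfl)
      (fun s => if s.1 = x₀ then s.2.val else 2*t + 2 - s.2.val)
    rintro ⟨y, i⟩ haS hane
    have hilt := i.isLt
    have haS' : (x₀, b) ∈ bag (y, i) := haS
    by_cases hyx : y = x₀
    · subst hyx
      have hi0 : i.val ≠ 0 := by
        intro h0
        exact hane (by rw [Prod.mk.injEq]; exact ⟨rfl, Fin.ext h0⟩)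
      refine ⟨(y, ⟨i.val - 1, by omega⟩), ?_, ?_, ?_⟩
      · show (y, b) ∈ bag (y, (⟨i.val - 1, by omega⟩ : Fin (t+1)))
        by_cases hcnd' : (((⟨i.val - 1, by omega⟩ : Fin (t+1)) : ℕ) = 0 ∨ y = r)
        · exact (hbag1 _ _ _ hcnd').mpr rfl
        · have hcnd : ¬(i.val = 0 ∨ y = r) := by
            simp only [not_or] at hcnd' ⊢
            exact ⟨hi0, hcnd'.2⟩
          have hm := (hbag2 _ _ _ hcnd).mp haS'
          rcases hm with ⟨_, hle⟩ | ⟨a₀, ha₀, heq⟩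
          · refine (hbag2 _ _ _ hcnd').mpr (Or.inl ⟨rfl, ?_⟩)
            simp only at hle ⊢
            omega
          · exfalso
            have hyr : y ≠ r := fun h => hcnd (Or.inr h)
            rw [Prod.mk.injEq] at heq
            exact (hpadj y hyr).ne heq.1
      · have hb'ne : ((y, ⟨i.val - 1, by omega⟩) : ι × Fin (t+1)) ≠ root := by
          rw [hroot]
          intro hq
          rw [Prod.mk.injEq, Fin.mk.injEq] at hq
          omega
        have hPb' : P (y, (⟨i.val - 1, by omega⟩ : Fin (t+1))) = (y, i) := by
          simp only [hP]
          rw [dif_pos (show ((y, (⟨i.val - 1, by omega⟩ : Fin (t+1))).2 : ℕ) < t by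
            show i.val - 1 < t; omega)]
          rw [Prod.mk.injEq]
          refine ⟨rfl, Fin.ext ?_⟩
          show i.val - 1 + 1 = i.val
          omega
        have hadj := hadjP _ hb'ne
        rw [hPb'] at hadj
        exact hadj.symm
      · simp
        simp only [Fin.lt_def, Fin.val_zero] at *
        omega
    · have hcnd : ¬(i.val = 0 ∨ y = r) :=
        fun hcnd => hyx ((hbag1 y i (x₀, b) hcnd).mp haS').symm
      have hi0 : i.val ≠ 0 := fun h => hcnd (Or.inl h)
      have hyr : y ≠ r := fun h => hcnd (Or.inr h)
      have hane' : ((y, i) : ι × Fin (t+1)) ≠ root := by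
        rw [hroot]
        intro hq
        rw [Prod.mk.injEq] at hq
        exact hyr hq.1
      have hm' : ∃ a₀ : Fin t, a₀.val ≤ i.val - 1 ∧ (x₀, b) = (pr y, mch y a₀) := by
        rcases (hbag2 _ _ _ hcnd).mp haS' with ⟨h1, _⟩ | h
        · exact absurd h1.symm hyx
        · exact h
      obtain ⟨a₀, ha₀, heq⟩ := hm'
      rw [Prod.mk.injEq] at heq
      by_cases hit : i.val < t
      · refine ⟨(y, ⟨i.val + 1, by omega⟩), ?_, ?_, ?_⟩
        · show (x₀, b) ∈ bag (y, (⟨i.val + 1, by omega⟩ : Fin (t+1)))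
          have hcnd' : ¬(((⟨i.val + 1, by omega⟩ : Fin (t+1)) : ℕ) = 0 ∨ y = r) := by
            simp [hyr]
          refine (hbag2 _ _ _ hcnd').mpr (Or.inr ⟨a₀, ?_, ?_⟩)
          · simp only; omega
          · rw [Prod.mk.injEq]; exact heq
        · have hPa : P (y, i) = (y, (⟨i.val + 1, by omega⟩ : Fin (t+1))) := by
            simp only [hP]
            rw [dif_pos hit]
          have hadj := hadjP _ hane'
          rwa [hPa] at hadj
        · simp [hyx]
          omega
      · refine ⟨(x₀, (⟨0, by omega⟩ : Fin (t+1))), ?_, ?_, ?_⟩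
        · exact (hbag1 x₀ ⟨0, by omega⟩ _ (Or.inl rfl)).mpr rfl
        · have hPa : P (y, i) = (x₀, (⟨0, by omega⟩ : Fin (t+1))) := by
            simp only [hP]
            rw [dif_neg (show ¬(((y, i).2 : ℕ) < t) by show ¬(i.val < t); omega)]
            rw [Prod.mk.injEq]
            exact ⟨heq.1.symm, rfl⟩
          have hadj := hadjP _ hane'
          rwa [hPa] at hadj
        · simp [hyx]
          omega
  · -- card bound
    rintro ⟨y, i⟩
    show (bag (y, i)).card ≤ t + 1
    by_cases hcnd : (i.val = 0 ∨ y = r)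
    · have hbe : bag (y, i) = Kx y := by
        simp only [hbag]; rw [if_pos hcnd]
      rw [hbe, hKcard]
      omega
    · have hi0 : i.val ≠ 0 := fun h => hcnd (Or.inl h)
      have hilt := i.isLt
      have hbe : bag (y, i) =
          ((Finset.univ.filter (fun a : Fin t => i.val - 1 ≤ a.val)).image
            (fun a => ((y : ι), a))) ∪
          ((Finset.univ.filter (fun a : Fin t => a.val ≤ i.val - 1)).image
            (fun a => (pr y, mch y a))) := by
        simp only [hbag]; rw [if_neg hcnd]
      rw [hbe]
      refine le_trans (Finset.card_union_le _ _) ?_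
      have h1 := Finset.card_image_le
        (s := Finset.univ.filter (fun a : Fin t => i.val - 1 ≤ a.val))
        (f := fun a => ((y : ι), a))
      have h2 := Finset.card_image_le
        (s := Finset.univ.filter (fun a : Fin t => a.val ≤ i.val - 1))
        (f := fun a => ((pr y : ι), mch y a))
      have h3 := card_filter_ge t (i.val - 1)
      have h4 := card_filter_le t (i.val - 1)
      omega

lemma tw_lower (t : ℕ) (ht : 1 ≤ t) {ι : Type} (τ : SimpleGraph ι) (hτ : τ.IsTree)
    (h2 : ∃ x y : ι, x ≠ y)
    (M : ∀ ⦃x y⦄, τ.Adj x y → (Fin t ≃ Fin t))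
    (hM : ∀ ⦃x y⦄ (hxy : τ.Adj x y), M hxy.symm = (M hxy).symm)
    (G : SimpleGraph (ι × Fin t))
    (hG : ∀ a b, G.Adj a b ↔
      (a.1 = b.1 ∧ a.2 ≠ b.2) ∨ ∃ hxy : τ.Adj a.1 b.1, M hxy a.2 = b.2)
    (k : ℕ) (hk : TwLE G k) : t ≤ k := by
  classical
  obtain ⟨D, hD⟩ := hk
  by_contra hlt
  push_neg at hlt
  have hcard : ∀ p, (D.bag p).card ≤ t := fun p => le_trans (hD p) (by omega)
  have hT' := D.isTree
  have bag_path : ∀ (v : ι × Fin t) (p q : D.ι), v ∈ D.bag p → v ∈ D.bag q →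
      ∀ s ∈ (upath hT' p q).support, v ∈ D.bag s := by
    intro v p q hp hq s hs
    have hconn := D.bagConn v
    obtain ⟨w⟩ := hconn.preconnected ⟨p, hp⟩ ⟨q, hq⟩
    have hsub := upath_support_subset hT'
      (w.map (⟨Subtype.val, fun {a b} h => h⟩ :
        (D.tree.induce {x | v ∈ D.bag x}) →g D.tree)) hs
    rw [Walk.support_map] at hsub
    obtain ⟨u, hu, rfl⟩ := List.mem_map.mp hsub
    exact u.2
  have hclique : ∀ z : ι, ∃ p, ∀ a : Fin t, (z, a) ∈ D.bag p := by
    intro z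
    have hcommon : ∀ a b : Fin t, ∃ n, (z, a) ∈ D.bag n ∧ (z, b) ∈ D.bag n := by
      intro a b
      by_cases hab : a = b
      · obtain ⟨n, hn⟩ := D.covers (z, a)
        exact ⟨n, hn, hab ▸ hn⟩
      · exact D.coversEdge ((hG (z, a) (z, b)).mpr (Or.inl ⟨rfl, hab⟩))
    obtain ⟨p, hp⟩ := helly_list hT'
      ((List.finRange t).map (fun a => {n | (z, a) ∈ D.bag n}))
      (by
        intro W hW
        obtain ⟨a, -, rfl⟩ := List.mem_map.mp hW
        intro p hp q hq s hs
        exact bag_path (z, a) p q hp hq s hs)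
      (by
        intro A hA B hB
        obtain ⟨a, -, rfl⟩ := List.mem_map.mp hA
        obtain ⟨b, -, rfl⟩ := List.mem_map.mp hB
        obtain ⟨n, h1, h2⟩ := hcommon a b
        exact ⟨n, h1, h2⟩)
      (by
        intro hnil
        have := congrArg List.length hnil
        simp at this
        omega)
    refine ⟨p, fun a => ?_⟩
    exact hp {n | (z, a) ∈ D.bag n} (List.mem_map.mpr ⟨a, List.mem_finRange a, rfl⟩)
  obtain ⟨x₁, y₁, hneq⟩ := h2
  obtain ⟨x, y, hxy⟩ : ∃ x y : ι, τ.Adj x y := by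
    obtain ⟨w⟩ := hτ.isConnected.preconnected x₁ y₁
    cases w with
    | nil => exact absurd rfl hneq
    | cons h _ => exact ⟨_, _, h⟩
  obtain ⟨p, hp⟩ := hclique x
  obtain ⟨q, hq⟩ := hclique y
  have hxyne : x ≠ y := hxy.ne
  have hinj : Function.Injective (fun a : Fin t => ((x : ι), a)) :=
    fun a b hab => by simpa using hab
  have key : ∀ (s q' : D.ι) (w : D.tree.Walk s q'), w.IsPath →
      (∀ a : Fin t, (x, a) ∈ D.bag s) → (∀ a : Fin t, (y, a) ∈ D.bag q') → False := by
    intro s q' w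
    induction w with
    | nil =>
      rename_i u
      intro _ hxs hys
      have hnotmem : ((y : ι), (⟨0, by omega⟩ : Fin t)) ∉
          Finset.univ.image (fun a : Fin t => ((x : ι), a)) := by
        intro hmem
        obtain ⟨a, -, hEq⟩ := Finset.mem_image.mp hmem
        rw [Prod.mk.injEq] at hEq
        exact hxyne hEq.1
      have hins : insert ((y : ι), (⟨0, by omega⟩ : Fin t))
          (Finset.univ.image (fun a : Fin t => ((x : ι), a))) ⊆ D.bag u := by
        intro v hv
        rcases Finset.mem_insert.mp hv with rfl | hv
        · exact hys _
        · obtain ⟨a, -, rfl⟩ := Finset.mem_image.mp hv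
          exact hxs a
      have hcard1 : (insert ((y : ι), (⟨0, by omega⟩ : Fin t))
          (Finset.univ.image (fun a : Fin t => ((x : ι), a)))).card = t + 1 := by
        rw [Finset.card_insert_of_notMem hnotmem,
          Finset.card_image_of_injective _ hinj]
        simp
      have h1 := Finset.card_le_card hins
      have h2 := hcard u
      omega
    | cons hadj w' ih =>
      rename_i u v qq
      intro hpath hxs hys
      have hw' : w'.IsPath := hpath.of_cons
      have hsubF : Finset.univ.image (fun a : Fin t => ((x : ι), a)) ⊆ D.bag u := by
        intro vv hvv
        obtain ⟨a, -, rfl⟩ := Finset.mem_image.mp hvv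
        exact hxs a
      have hFcard : (Finset.univ.image (fun a : Fin t => ((x : ι), a))).card = t := by
        rw [Finset.card_image_of_injective _ hinj]
        simp
      have hbagu : Finset.univ.image (fun a : Fin t => ((x : ι), a)) = D.bag u :=
        Finset.eq_of_subset_of_card_le hsubF (by rw [hFcard]; exact hcard u)
      have hnext : ∀ a : Fin t, (x, a) ∈ D.bag v := by
        intro a
        obtain ⟨n, hn1, hn2⟩ := D.coversEdge
          ((hG (x, a) (y, M hxy a)).mpr (Or.inr ⟨hxy, rfl⟩))
        by_cases hcase : v ∈ (upath hT' u n).support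
        · exact bag_path (x, a) u n (hxs a) hn1 v hcase
        · exfalso
          have hupq : Walk.cons hadj w' = upath hT' u qq := upath_eq hT' _ hpath
          have hvuq : v ∈ (upath hT' u qq).support := by
            rw [← hupq]; simp
          have hvn : v ∈ (upath hT' n qq).support := by
            have hsubu := upath_support_subset hT'
              ((upath hT' u n).append (upath hT' n qq))
            have hvin := hsubu hvuq
            rcases (Walk.mem_support_append_iff _ _).mp hvin with h | h
            · exact absurd h hcase
            · exact h
          have hc2 : Walk.cons hadj.symm (upath hT' u n) = upath hT' v n :=
            upath_eq hT' _ ((upath_isPath hT' u n).cons hcase)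
          have humem : u ∈ (upath hT' n v).support := by
            rw [← upath_reverse hT' v n, Walk.support_reverse, List.mem_reverse, ← hc2]
            simp
          have hu_nq : u ∈ (upath hT' n qq).support := by
            have htake : (upath hT' n qq).takeUntil v hvn = upath hT' n v :=
              upath_eq hT' _ ((upath_isPath hT' n qq).takeUntil hvn)
            exact Walk.support_takeUntil_subset (upath hT' n qq) hvn (htake ▸ humem)
          have hbu : ((y : ι), M hxy a) ∈ D.bag u :=
            bag_path (y, M hxy a) n qq hn2 (hys _) u hu_nq
          rw [← hbagu] at hbu
          obtain ⟨a', -, hEq⟩ := Finset.mem_image.mp hbu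
          rw [Prod.mk.injEq] at hEq
          exact hxyne hEq.1
      exact ih hw' hnext hys
  exact key p q (upath hT' p q) (upath_isPath hT' p q) hp hq

end TwAux

theorem stmt14 (t : ℕ) (ht : 1 ≤ t) {ι : Type} [Fintype ι]
    (τ : SimpleGraph ι) (hτ : τ.IsTree) (h2 : ∃ x y : ι, x ≠ y)
    (M : ∀ ⦃x y⦄, τ.Adj x y → (Fin t ≃ Fin t))
    (hM : ∀ ⦃x y⦄ (hxy : τ.Adj x y), M hxy.symm = (M hxy).symm)
    (G : SimpleGraph (ι × Fin t))
    (hG : ∀ a b, G.Adj a b ↔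
      (a.1 = b.1 ∧ a.2 ≠ b.2) ∨ ∃ hxy : τ.Adj a.1 b.1, M hxy a.2 = b.2) :
    TwLE G t ∧ ∀ k, TwLE G k → t ≤ k := by
  exact ⟨TwAux.twle_upper t ht τ hτ M hM G hG,
    fun k hk => TwAux.tw_lower t ht τ hτ h2 M hM G hG k hk⟩
end

section
/- For every positive integer t and every h ≥ 0, the graph B(T_h), where T_h is the complete ternary tree of height h, has pathwidth at least t(h+1) - 1. -/
open SimpleGraph

lemma pd_cross {V : Type} {G : SimpleGraph V} (P : PathDecomp G)
    {u v : V} (p : G.Walk u v) {j : Fin P.n} :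
    ∀ i k : Fin P.n, i ≤ j → j ≤ k → u ∈ P.bag i → v ∈ P.bag k →
      ∃ z ∈ p.support, z ∈ P.bag j := by
  induction p with
  | nil => exact fun i k hij hjk hu hv => ⟨_, by simp, P.consecutive _ i j k hij hjk hu hv⟩
  | @cons a b c hadj q ih =>
    intro i k hij hjk hu hv
    obtain ⟨m, ham, hbm⟩ := P.coversEdge hadj
    rcases le_total m j with hm | hm
    · obtain ⟨z, hz, hzj⟩ := ih m k hm hjk hbm hv
      exact ⟨z, by simp [hz], hzj⟩
    · exact ⟨a, by simp, P.consecutive a i j m hij hm hu ham⟩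

lemma pd_clique {V : Type} [DecidableEq V] {G : SimpleGraph V} (P : PathDecomp G)
    (s : Finset V) (hs : s.Nonempty)
    (hcl : ∀ u ∈ s, ∀ v ∈ s, u ≠ v → G.Adj u v) :
    ∃ j, ∀ v ∈ s, v ∈ P.bag j := by
  have hne : ∀ v : V, (Finset.univ.filter (fun j => v ∈ P.bag j)).Nonempty := by
    intro v
    obtain ⟨i, hi⟩ := P.covers v
    exact ⟨i, by simp [hi]⟩
  set f : V → Fin P.n := fun v => (Finset.univ.filter (fun j => v ∈ P.bag j)).min' (hne v) with hf
  have hfmem : ∀ v, v ∈ P.bag (f v) := by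
    intro v
    have := (Finset.univ.filter (fun j => v ∈ P.bag j)).min'_mem (hne v)
    simpa [hf] using this
  have hfmin : ∀ v (m : Fin P.n), v ∈ P.bag m → f v ≤ m := by
    intro v m hm
    exact Finset.min'_le _ _ (by simp [hm])
  obtain ⟨v₀, hv₀s, hmax⟩ := Finset.exists_max_image s f hs
  refine ⟨f v₀, fun v hv => ?_⟩
  by_cases hvv : v = v₀
  · subst hvv; exact hfmem v
  · obtain ⟨m, hvm, hv₀m⟩ := P.coversEdge (hcl v hv v₀ hv₀s hvv)
    exact P.consecutive v (f v) (f v₀) m (hmax v hv) (hfmin v₀ m hv₀m) (hfmem v) hvm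

lemma good_pair {V : Type} [DecidableEq V] {t : ℕ} (C : Finset V) (hC : C.card < t)
    (f g : Fin t → V) (hf : Function.Injective f) (hg : Function.Injective g)
    (hfg : ∀ i i', f i ≠ g i') : ∃ i, f i ∉ C ∧ g i ∉ C := by
  by_contra hcon
  push_neg at hcon
  classical
  set F : Fin t → V := fun i => if f i ∈ C then f i else g i with hF
  have hmem : ∀ i : Fin t, i ∈ Finset.univ → F i ∈ C := by
    intro i _
    by_cases h : f i ∈ C
    · simp [hF, h]
    · simp [hF, h, hcon i h]
  have hinj : Set.InjOn F ↑(Finset.univ : Finset (Fin t)) := by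
    intro i _ i' _ hii
    by_cases h1 : f i ∈ C <;> by_cases h2 : f i' ∈ C <;> simp [hF, h1, h2] at hii
    · exact hf hii
    · exact absurd hii (hfg i i')
    · exact absurd hii.symm (hfg i' i)
    · exact hg hii
  have := Finset.card_le_card_of_injOn F hmem hinj
  simp at this
  omega

lemma median3 {β : Type*} [LinearOrder β] (f : Fin 3 → β) :
    ∃ a b c : Fin 3, a ≠ b ∧ a ≠ c ∧ b ≠ c ∧ f a ≤ f b ∧ f b ≤ f c := by
  rcases le_total (f 0) (f 1) with h01 | h01 <;>
    rcases le_total (f 1) (f 2) with h12 | h12 <;>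
    rcases le_total (f 0) (f 2) with h02 | h02
  · exact ⟨0, 1, 2, by decide, by decide, by decide, h01, h12⟩
  · exact ⟨0, 1, 2, by decide, by decide, by decide, h01, h12⟩
  · exact ⟨0, 2, 1, by decide, by decide, by decide, h02, h12⟩
  · exact ⟨2, 0, 1, by decide, by decide, by decide, h02, h01⟩
  · exact ⟨1, 0, 2, by decide, by decide, by decide, h01, h02⟩
  · exact ⟨1, 2, 0, by decide, by decide, by decide, h12, h02⟩
  · exact ⟨1, 0, 2, by decide, by decide, by decide, h01, h02⟩
  · exact ⟨2, 1, 0, by decide, by decide, by decide, h12, h01⟩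
section Stmt15Main

lemma suffix_cases_aux (x l : List (Fin 3)) (hs : x <:+ l) : l = x ∨ ∃ b, (b::x) <:+ l := by
  obtain ⟨s, rfl⟩ := hs
  rcases List.eq_nil_or_concat s with rfl | ⟨L, b, rfl⟩
  · left; simp
  · right; exact ⟨b, L, by simp⟩

lemma suffix_cons_eq_aux {b b' : Fin 3} {x l : List (Fin 3)}
    (hs : (b::x) <:+ l) (hs' : (b'::x) <:+ l) : b = b' := by
  rcases List.suffix_or_suffix_of_suffix hs hs' with h2 | h2 <;>
  · have := h2.eq_of_length (by simp)
    simp_all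

lemma suffix_len_eq_aux {x l : List (Fin 3)} (hs : x <:+ l) (hl : l.length ≤ x.length) :
    l = x :=
  (List.IsSuffix.eq_of_length hs (le_antisymm hs.length_le hl)).symm

variable {t h : ℕ} (ht : 1 ≤ t)
  {M : ∀ ⦃x y⦄, (CTT h).Adj x y → (Fin t ≃ Fin t)}
  {G : SimpleGraph ({l : List (Fin 3) // l.length ≤ h} × Fin t)}
  (hG : ∀ a b, G.Adj a b ↔
      (a.1 = b.1 ∧ a.2 ≠ b.2) ∨ ∃ hxy : (CTT h).Adj a.1 b.1, M hxy a.2 = b.2)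

include hG M

lemma adj_same_aux (u v : {l : List (Fin 3) // l.length ≤ h} × Fin t)
    (h1 : u.1 = v.1) (h2 : u.2 ≠ v.2) : G.Adj u v :=
  (hG u v).2 (Or.inl ⟨h1, h2⟩)

omit M hG in
lemma ctt_adj_aux (x : List (Fin 3)) (b : Fin 3) (hx : x.length ≤ h)
    (hbx : (b::x).length ≤ h) :
    (CTT h).Adj ⟨x, hx⟩ ⟨b::x, hbx⟩ := by
  rw [CTT, SimpleGraph.fromRel_adj]
  constructor
  · intro hcon
    have := congrArg (fun z => z.val.length) hcon
    simp at this
  · left; exact ⟨b, rfl⟩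

lemma adj_match_aux (x : List (Fin 3)) (b : Fin 3) (hx : x.length ≤ h)
    (hbx : (b::x).length ≤ h) (i : Fin t) :
    G.Adj (⟨x, hx⟩, i) (⟨b::x, hbx⟩, M (ctt_adj_aux x b hx hbx) i) :=
  (hG _ _).2 (Or.inr ⟨ctt_adj_aux x b hx hbx, rfl⟩)

omit M hG in
/-- `A` stays connected after deleting fewer than `t` vertices. -/
def RobAux (G : SimpleGraph ({l : List (Fin 3) // l.length ≤ h} × Fin t))
    (A : Set ({l : List (Fin 3) // l.length ≤ h} × Fin t)) : Prop :=
  ∀ C : Finset ({l : List (Fin 3) // l.length ≤ h} × Fin t), C.card < t →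
    ∀ u v, u ∈ A → u ∉ C → v ∈ A → v ∉ C →
      ∃ p : G.Walk u v, ∀ z ∈ p.support, z ∈ A ∧ z ∉ C

/-- From any surviving vertex of `A` we can reach a surviving vertex of the root clique. -/
lemma reach_clique_aux (x : List (Fin 3))
    (A : Set ({l : List (Fin 3) // l.length ≤ h} × Fin t))
    (H1 : ∀ v : {l : List (Fin 3) // l.length ≤ h} × Fin t, v.1.val = x → v ∈ A)
    (H2 : ∀ v ∈ A, x <:+ v.1.val)
    (H3 : ∀ (b : Fin 3) w z, w ∈ A → (b::x) <:+ w.1.val → (b::x) <:+ z.1.val → z ∈ A)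
    (Hrob : ∀ b : Fin 3, RobAux G {v | (b::x) <:+ v.1.val})
    (C : Finset ({l : List (Fin 3) // l.length ≤ h} × Fin t)) (hC : C.card < t)
    (w : {l : List (Fin 3) // l.length ≤ h} × Fin t) (hw : w ∈ A) (hwC : w ∉ C) :
    ∃ z, z.1.val = x ∧ z ∉ C ∧ ∃ p : G.Walk w z, ∀ y ∈ p.support, y ∈ A ∧ y ∉ C := by
  rcases suffix_cases_aux x w.1.val (H2 w hw) with heq | ⟨b, hb⟩
  · refine ⟨w, heq, hwC, SimpleGraph.Walk.nil, ?_⟩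
    intro y hy
    simp only [SimpleGraph.Walk.support_nil, List.mem_singleton] at hy
    subst hy
    exact ⟨hw, hwC⟩
  · have hbx : (b::x).length ≤ h := le_trans hb.length_le w.1.property
    have hx : x.length ≤ h := le_trans (by simp) hbx
    have hadj := ctt_adj_aux (h := h) x b hx hbx
    obtain ⟨i, hfi, hgi⟩ := good_pair C hC
      (fun i : Fin t => ((⟨x, hx⟩, i) : _ × Fin t))
      (fun i : Fin t => ((⟨b::x, hbx⟩, M hadj i) : _ × Fin t))
      (fun i i' hii => by simpa using congrArg Prod.snd hii)
      (fun i i' hii => (M hadj).injective (by simpa using congrArg Prod.snd hii))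
      (fun i i' hii => by
        have := congrArg (fun z => z.1.val.length) hii
        simp at this)
    obtain ⟨q, hq⟩ := Hrob b C hC w (⟨b::x, hbx⟩, M hadj i) hb hwC (by
        show (b::x) <:+ (b::x); exact List.suffix_rfl) hgi
    refine ⟨(⟨x, hx⟩, i), rfl, hfi,
      q.concat ((adj_match_aux hG x b hx hbx i).symm), ?_⟩
    intro y hy
    rw [SimpleGraph.Walk.support_concat, List.mem_append] at hy
    rcases hy with hy | hy
    · obtain ⟨hyS, hyC⟩ := hq y hy
      exact ⟨H3 b w y hw hb hyS, hyC⟩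
    · simp at hy
      subst hy
      exact ⟨H1 _ rfl, hfi⟩

lemma core_rob_aux (x : List (Fin 3))
    (A : Set ({l : List (Fin 3) // l.length ≤ h} × Fin t))
    (H1 : ∀ v : {l : List (Fin 3) // l.length ≤ h} × Fin t, v.1.val = x → v ∈ A)
    (H2 : ∀ v ∈ A, x <:+ v.1.val)
    (H3 : ∀ (b : Fin 3) w z, w ∈ A → (b::x) <:+ w.1.val → (b::x) <:+ z.1.val → z ∈ A)
    (Hrob : ∀ b : Fin 3, RobAux G {v | (b::x) <:+ v.1.val}) :
    RobAux G A := by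
  intro C hC u v hu huC hv hvC
  obtain ⟨z₁, hz₁x, hz₁C, p₁, hp₁⟩ := reach_clique_aux hG x A H1 H2 H3 Hrob C hC u hu huC
  obtain ⟨z₂, hz₂x, hz₂C, p₂, hp₂⟩ := reach_clique_aux hG x A H1 H2 H3 Hrob C hC v hv hvC
  by_cases hz : z₁ = z₂
  · subst hz
    refine ⟨p₁.append p₂.reverse, ?_⟩
    intro y hy
    rw [SimpleGraph.Walk.mem_support_append_iff] at hy
    rcases hy with hy | hy
    · exact hp₁ y hy
    · exact hp₂ y (by simpa [SimpleGraph.Walk.support_reverse] using hy)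
  · have hadj : G.Adj z₁ z₂ := by
      refine adj_same_aux hG z₁ z₂ (Subtype.ext (hz₁x.trans hz₂x.symm)) ?_
      intro hsnd
      exact hz (Prod.ext (Subtype.ext (hz₁x.trans hz₂x.symm)) hsnd)
    refine ⟨p₁.append (SimpleGraph.Walk.cons hadj p₂.reverse), ?_⟩
    intro y hy
    rw [SimpleGraph.Walk.mem_support_append_iff] at hy
    rcases hy with hy | hy
    · exact hp₁ y hy
    · rw [SimpleGraph.Walk.support_cons, List.mem_cons] at hy
      rcases hy with rfl | hy
      · exact ⟨H1 _ hz₁x, hz₁C⟩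
      · exact hp₂ y (by simpa [SimpleGraph.Walk.support_reverse] using hy)

lemma rob1_aux : ∀ (n : ℕ) (x : List (Fin 3)), x.length + n = h →
    RobAux G {v | x <:+ v.1.val} := by
  intro n
  induction n with
  | zero =>
    intro x hxe C hC u v hu huC hv hvC
    have hux : u.1.val = x := suffix_len_eq_aux hu (le_trans u.1.2 (by omega))
    have hvx : v.1.val = x := suffix_len_eq_aux hv (le_trans v.1.2 (by omega))
    by_cases huv : u = v
    · subst huv
      refine ⟨SimpleGraph.Walk.nil, ?_⟩
      intro z hz
      simp only [SimpleGraph.Walk.support_nil, List.mem_singleton] at hz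
      subst hz
      exact ⟨hu, huC⟩
    · have hadj := adj_same_aux hG u v (Subtype.ext (hux.trans hvx.symm))
        (fun hsnd => huv (Prod.ext (Subtype.ext (hux.trans hvx.symm)) hsnd))
      refine ⟨hadj.toWalk, ?_⟩
      intro z hz
      simp only [SimpleGraph.Adj.toWalk, SimpleGraph.Walk.support_cons,
        SimpleGraph.Walk.support_nil, List.mem_cons, List.mem_singleton] at hz
      rcases hz with rfl | rfl | hfalse
      · exact ⟨hu, huC⟩
      · exact ⟨hv, hvC⟩
      · exact absurd hfalse (by simp)
  | succ n ih =>
    intro x hxe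
    refine core_rob_aux hG x _ ?_ ?_ ?_ ?_
    · intro v hvx
      show x <:+ v.1.val
      rw [hvx]
    · exact fun v hv => hv
    · intro b w z _ _ hz
      exact ((List.suffix_cons b x).trans hz : x <:+ z.1.val)
    · intro b
      exact ih (b::x) (by simp; omega)

lemma rob2_aux (x : List (Fin 3)) (n : ℕ) (hxe : x.length + (n+1) = h) (c : Fin 3) :
    RobAux G {v | x <:+ v.1.val ∧ ¬((c::x) <:+ v.1.val)} := by
  refine core_rob_aux hG x _ ?_ ?_ ?_ ?_
  · intro v hvx
    refine ⟨by rw [hvx], ?_⟩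
    intro hcon
    have := hcon.length_le
    rw [hvx] at this
    simp at this
  · exact fun v hv => hv.1
  · intro b w z hw hbw hbz
    have hbc : b ≠ c := by rintro rfl; exact hw.2 hbw
    exact ⟨(List.suffix_cons b x).trans hbz, fun hcz => hbc (suffix_cons_eq_aux hbz hcz)⟩
  · intro b
    exact rob1_aux hG n (b::x) (by simp; omega)

lemma main_claim_aux (ht : 1 ≤ t) (P : PathDecomp G) :
    ∀ (n : ℕ) (x : List (Fin 3)), x.length + n = h →
    ∃ j : Fin P.n, t * (n+1) ≤ ((P.bag j).filter (fun v => x <:+ v.1.val)).card := by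
  intro n
  induction n with
  | zero =>
    intro x hxe
    have hx : x.length ≤ h := by omega
    set s : Finset _ := Finset.univ.image
      (fun i : Fin t => ((⟨x, hx⟩, i) : {l : List (Fin 3) // l.length ≤ h} × Fin t)) with hs
    have hsne : s.Nonempty := ⟨(⟨x, hx⟩, ⟨0, ht⟩), by simp [hs]⟩
    have hclq : ∀ u ∈ s, ∀ v ∈ s, u ≠ v → G.Adj u v := by
      intro u hu v hv huv
      simp only [hs, Finset.mem_image, Finset.mem_univ, true_and] at hu hv
      obtain ⟨i, rfl⟩ := hu
      obtain ⟨i', rfl⟩ := hv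
      refine adj_same_aux hG _ _ rfl ?_
      intro hii
      simp only at hii
      exact huv (by rw [hii])
    obtain ⟨j, hj⟩ := pd_clique P s hsne hclq
    refine ⟨j, ?_⟩
    have hsub : s ⊆ (P.bag j).filter (fun v => x <:+ v.1.val) := by
      intro v hv
      refine Finset.mem_filter.2 ⟨hj v hv, ?_⟩
      simp only [hs, Finset.mem_image] at hv
      obtain ⟨i, _, rfl⟩ := hv
      exact List.suffix_rfl
    have hcard : s.card = t := by
      rw [hs, Finset.card_image_of_injective _
        (fun i i' hii => by simpa using congrArg Prod.snd hii)]
      simp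
    calc t * (0+1) = t := by ring
    _ = s.card := hcard.symm
    _ ≤ _ := Finset.card_le_card hsub
  | succ n ih =>
    intro x hxe
    have hch : ∀ b : Fin 3, ∃ j : Fin P.n,
        t * (n+1) ≤ ((P.bag j).filter (fun v => (b::x) <:+ v.1.val)).card :=
      fun b => ih (b::x) (by simp; omega)
    choose jj Hjj using hch
    obtain ⟨a, c, d, hac, had, hcd, hle1, hle2⟩ := median3 jj
    set C : Finset _ := (P.bag (jj c)).filter
        (fun v => x <:+ v.1.val ∧ ¬((c::x) <:+ v.1.val)) with hCdef
    by_cases hCt : t ≤ C.card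
    · refine ⟨jj c, ?_⟩
      have hdisj : Disjoint C ((P.bag (jj c)).filter (fun v => (c::x) <:+ v.1.val)) := by
        rw [Finset.disjoint_left]
        intro z hz1 hz2
        exact (Finset.mem_filter.1 hz1).2.2 (Finset.mem_filter.1 hz2).2
      have hsub : C ∪ (P.bag (jj c)).filter (fun v => (c::x) <:+ v.1.val) ⊆
          (P.bag (jj c)).filter (fun v => x <:+ v.1.val) := by
        intro z hz
        rcases Finset.mem_union.1 hz with hz | hz
        · exact Finset.mem_filter.2 ⟨(Finset.mem_filter.1 hz).1, (Finset.mem_filter.1 hz).2.1⟩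
        · exact Finset.mem_filter.2 ⟨(Finset.mem_filter.1 hz).1,
            (List.suffix_cons c x).trans (Finset.mem_filter.1 hz).2⟩
      have hcards := Finset.card_le_card hsub
      rw [Finset.card_union_of_disjoint hdisj] at hcards
      have h2 := Hjj c
      calc t * (n+1+1) = t + t*(n+1) := by ring
      _ ≤ C.card + ((P.bag (jj c)).filter (fun v => (c::x) <:+ v.1.val)).card :=
          Nat.add_le_add hCt h2
      _ ≤ _ := hcards
    · push_neg at hCt
      exfalso
      have htle : t ≤ t * (n+1) := by
        calc t = t * 1 := (Nat.mul_one t).symm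
        _ ≤ t * (n+1) := Nat.mul_le_mul_left t (by omega)
      have hpick : ∀ e : Fin 3, e ≠ c →
          ∃ v₁ ∈ (P.bag (jj e)).filter (fun v => (e::x) <:+ v.1.val), v₁ ∉ P.bag (jj c) := by
        intro e hec
        by_contra hcon
        push_neg at hcon
        have hsub1 : (P.bag (jj e)).filter (fun v => (e::x) <:+ v.1.val) ⊆ C := by
          intro z hz
          obtain ⟨hz1, hz2⟩ := Finset.mem_filter.1 hz
          refine Finset.mem_filter.2 ⟨hcon z hz, ⟨(List.suffix_cons e x).trans hz2, ?_⟩⟩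
          intro hcz
          exact hec (suffix_cons_eq_aux hz2 hcz)
        have hc1 := Finset.card_le_card hsub1
        have hc2 := Hjj e
        omega
      obtain ⟨v₁, hv₁mem, hv₁c⟩ := hpick a hac
      obtain ⟨v₃, hv₃mem, hv₃c⟩ := hpick d (fun hdc => hcd hdc.symm)
      obtain ⟨hv₁bag, hv₁suf⟩ := Finset.mem_filter.1 hv₁mem
      obtain ⟨hv₃bag, hv₃suf⟩ := Finset.mem_filter.1 hv₃mem
      have hv₁A : v₁ ∈ {v : {l : List (Fin 3) // l.length ≤ h} × Fin t |
          x <:+ v.1.val ∧ ¬((c::x) <:+ v.1.val)} :=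
        ⟨(List.suffix_cons a x).trans hv₁suf, fun hcz => hac (suffix_cons_eq_aux hv₁suf hcz)⟩
      have hv₃A : v₃ ∈ {v : {l : List (Fin 3) // l.length ≤ h} × Fin t |
          x <:+ v.1.val ∧ ¬((c::x) <:+ v.1.val)} :=
        ⟨(List.suffix_cons d x).trans hv₃suf,
          fun hcz => hcd (suffix_cons_eq_aux hcz hv₃suf)⟩
      have hv₁C : v₁ ∉ C := fun hm => hv₁c (Finset.mem_filter.1 hm).1
      have hv₃C : v₃ ∉ C := fun hm => hv₃c (Finset.mem_filter.1 hm).1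
      obtain ⟨p, hp⟩ := rob2_aux hG x n hxe c C hCt v₁ v₃ hv₁A hv₁C hv₃A hv₃C
      obtain ⟨z, hzsup, hzbag⟩ := pd_cross P p (jj a) (jj d) hle1 hle2 hv₁bag hv₃bag
      obtain ⟨hzA, hzC⟩ := hp z hzsup
      exact hzC (Finset.mem_filter.2 ⟨hzbag, hzA⟩)

end Stmt15Main
theorem stmt15 (t h : ℕ) (ht : 1 ≤ t)
    (M : ∀ ⦃x y⦄, (CTT h).Adj x y → (Fin t ≃ Fin t))
    (hM : ∀ ⦃x y⦄ (hxy : (CTT h).Adj x y), M hxy.symm = (M hxy).symm)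
    (G : SimpleGraph ({l : List (Fin 3) // l.length ≤ h} × Fin t))
    (hG : ∀ a b, G.Adj a b ↔
      (a.1 = b.1 ∧ a.2 ≠ b.2) ∨ ∃ hxy : (CTT h).Adj a.1 b.1, M hxy a.2 = b.2) :
    ∀ k, PwLE G k → t * (h + 1) - 1 ≤ k := by
  intro k hk
  obtain ⟨P, hP⟩ := hk
  obtain ⟨j, hj⟩ := main_claim_aux hG ht P h [] (by simp)
  have h1 := Finset.card_filter_le (P.bag j) (fun v => [] <:+ v.1.val)
  have h2 := hP j
  exact Nat.sub_le_iff_le_add.2 (le_trans hj (le_trans h1 h2))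
end

section
/- In every path decomposition of B(T_h), there exist a bag B of size at least t(h+1) and t vertex-disjoint paths in B(T_h), each with one endpoint in the root clique and the other endpoint in B. -/
open SimpleGraph

section Aux

variable {V : Type} {G : SimpleGraph V}

/-- In a path decomposition, any walk from a vertex in a bag left of `m` to a
vertex in a bag right of `m` meets the bag `m`. -/
lemma bag_cross (P : PathDecomp G) (m : Fin P.n) :
    ∀ {x y : V} (q : G.Walk x y) (a b : Fin P.n), a ≤ m → m ≤ b →
      x ∈ P.bag a → y ∈ P.bag b → ∃ v ∈ q.support, v ∈ P.bag m := by
  intro x y q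
  induction q with
  | nil =>
    intro a b h1 h2 ha hb
    exact ⟨_, Walk.start_mem_support _, P.consecutive _ a m b h1 h2 ha hb⟩
  | cons hadj q ih =>
    intro a b h1 h2 ha hb
    obtain ⟨c, hc1, hc2⟩ := P.coversEdge hadj
    rcases le_total c m with hcm | hcm
    · obtain ⟨z, hz, hzm⟩ := ih c b hcm h2 hc2 hb
      exact ⟨z, by rw [Walk.support_cons]; exact List.mem_cons_of_mem _ hz, hzm⟩
    · exact ⟨_, Walk.start_mem_support _, P.consecutive _ a m c h1 hcm ha hc1⟩

/-- A clique is contained in a single bag of a path decomposition. -/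
lemma clique_bag (P : PathDecomp G) (s : Finset V) (hs : s.Nonempty)
    (hadj : ∀ u ∈ s, ∀ v ∈ s, u ≠ v → G.Adj u v) :
    ∃ i, ∀ v ∈ s, v ∈ P.bag i := by
  classical
  have hn : ∀ v : V, (Finset.univ.filter (fun i => v ∈ P.bag i)).Nonempty := by
    intro v; obtain ⟨i, hi⟩ := P.covers v; exact ⟨i, by simp [hi]⟩
  set f : V → Fin P.n := fun v => (Finset.univ.filter (fun i => v ∈ P.bag i)).min' (hn v) with hf
  have hfmem : ∀ v, v ∈ P.bag (f v) := by
    intro v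
    have := (Finset.univ.filter (fun i => v ∈ P.bag i)).min'_mem (hn v)
    simpa using this
  have hfle : ∀ v (c : Fin P.n), v ∈ P.bag c → f v ≤ c := by
    intro v c hc
    exact Finset.min'_le _ _ (by simp [hc])
  have hne : (s.image f).Nonempty := hs.image f
  obtain ⟨v₀, hv₀s, hv₀⟩ := Finset.mem_image.mp ((s.image f).max'_mem hne)
  refine ⟨(s.image f).max' hne, fun v hv => ?_⟩
  by_cases hvv : v = v₀
  · subst hvv; rw [← hv₀]; exact hfmem v
  · obtain ⟨c, hc1, hc2⟩ := P.coversEdge (hadj v hv v₀ hv₀s hvv)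
    have h1 : f v ≤ (s.image f).max' hne := Finset.le_max' _ _ (Finset.mem_image_of_mem f hv)
    have h2 : (s.image f).max' hne ≤ c := hv₀ ▸ hfle v₀ c hc2
    exact P.consecutive v (f v) _ c h1 h2 (hfmem v) hc1

/-- Median selection among three values relative to a fourth. -/
lemma med3 (i0 : ℕ) (f : Fin 3 → ℕ) :
    ∃ m s : Fin 3, m ≠ s ∧ ((i0 ≤ f m ∧ f m ≤ f s) ∨ (f s ≤ f m ∧ f m ≤ i0)) := by
  rcases le_total (f 0) (f 1) with h1 | h1 <;>
  rcases le_total (f 1) (f 2) with h2 | h2 <;>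
  rcases le_total (f 0) (f 2) with h3 | h3 <;>
  rcases le_total i0 (f 0) with h4 | h4 <;>
  rcases le_total i0 (f 1) with h5 | h5 <;>
  rcases le_total i0 (f 2) with h6 | h6 <;>
  first
    | exact ⟨0, 1, by decide, by omega⟩
    | exact ⟨0, 2, by decide, by omega⟩
    | exact ⟨1, 0, by decide, by omega⟩
    | exact ⟨1, 2, by decide, by omega⟩
    | exact ⟨2, 0, by decide, by omega⟩
    | exact ⟨2, 1, by decide, by omega⟩

lemma ctt_adj_append {h : ℕ} {x y : {l : List (Fin 3) // l.length ≤ h}}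
    (hxy : (CTT h).Adj x y) (b : Fin 3) :
    (CTT (h+1)).Adj ⟨x.val ++ [b], by simpa using Nat.succ_le_succ x.2⟩
      ⟨y.val ++ [b], by simpa using Nat.succ_le_succ y.2⟩ := by
  simp only [CTT, SimpleGraph.fromRel_adj] at hxy ⊢
  obtain ⟨hne, hrel⟩ := hxy
  constructor
  · intro hc
    apply hne
    apply Subtype.ext
    have := congrArg Subtype.val hc
    simpa using this
  · rcases hrel with ⟨c, hc⟩ | ⟨c, hc⟩
    · exact Or.inl ⟨c, by simp [hc]⟩
    · exact Or.inr ⟨c, by simp [hc]⟩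

lemma ctt_adj_root_child (h : ℕ) (b : Fin 3) :
    (CTT (h+1)).Adj ⟨[], by simp⟩ ⟨[b], by simp⟩ := by
  simp only [CTT, SimpleGraph.fromRel_adj]
  exact ⟨by intro hc; simpa using congrArg Subtype.val hc, Or.inl ⟨b, rfl⟩⟩

end Aux

/-- The embedding of the height-`h` vertex set into the height-`h+1` one,
as the subtree hanging below child `b` of the root. -/
def appEmb (h t : ℕ) (b : Fin 3) :
    ({l : List (Fin 3) // l.length ≤ h} × Fin t) →
      ({l : List (Fin 3) // l.length ≤ h + 1} × Fin t) :=
  fun x => (⟨x.1.val ++ [b], by simpa using Nat.succ_le_succ x.1.2⟩, x.2)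

lemma appEmb_inj (h t : ℕ) (b : Fin 3) : Function.Injective (appEmb h t b) := by
  rintro ⟨⟨l, hl⟩, j⟩ ⟨⟨l', hl'⟩, j'⟩ hx
  simp only [appEmb, Prod.mk.injEq, Subtype.mk.injEq] at hx
  obtain ⟨h1, h2⟩ := hx
  simp only [Prod.mk.injEq, Subtype.mk.injEq]
  exact ⟨by simpa using h1, h2⟩

/-- The key lemma: in any path decomposition of a graph containing a blowup of
the complete ternary tree of height `h` (with cliques of size `t` and matchings
along tree edges), there is a bag containing at least `t * (h + 1)` vertices of
the blowup, reachable from the root clique by `t` disjoint paths. -/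
lemma key (t : ℕ) (ht : 1 ≤ t) :
    ∀ (h : ℕ) {V : Type} (G : SimpleGraph V)
      (e : {l : List (Fin 3) // l.length ≤ h} × Fin t → V),
      Function.Injective e →
      (∀ (x : {l : List (Fin 3) // l.length ≤ h}) (j j' : Fin t), j ≠ j' →
        G.Adj (e (x, j)) (e (x, j'))) →
      (∀ x y, (CTT h).Adj x y →
        ∃ σ : Equiv.Perm (Fin t), ∀ j, G.Adj (e (x, j)) (e (y, σ j))) →
      ∀ P : PathDecomp G,
      ∃ i : Fin P.n, ∃ S : Finset V,
        S ⊆ P.bag i ∧ (↑S : Set V) ⊆ Set.range e ∧ t * (h + 1) ≤ S.card ∧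
        ∃ (w : Fin t → V) (p : ∀ j : Fin t, G.Walk (e (⟨[], by simp⟩, j)) (w j)),
          (∀ j, (p j).IsPath) ∧ (∀ j, w j ∈ P.bag i) ∧
          (∀ j, ∀ v ∈ (p j).support, v ∈ Set.range e) ∧
          (∀ j j', j ≠ j' → ∀ v, v ∈ (p j).support → v ∉ (p j').support) := by
  intro h
  induction h with
  | zero =>
    intro V G e he hedge1 hedge2 P
    classical
    have hinj : Function.Injective (fun j : Fin t => e (⟨[], by simp⟩, j)) := by
      intro j j' hjj
      have := he hjj
      simpa using this
    obtain ⟨i₀, hi₀⟩ := clique_bag P (Finset.univ.image (fun j : Fin t => e (⟨[], by simp⟩, j)))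
      ⟨_, Finset.mem_image_of_mem _ (Finset.mem_univ (⟨0, ht⟩ : Fin t))⟩
      (by
        intro u hu v hv huv
        obtain ⟨j, -, rfl⟩ := Finset.mem_image.mp hu
        obtain ⟨j', -, rfl⟩ := Finset.mem_image.mp hv
        exact hedge1 _ j j' (fun hc => huv (by rw [hc])))
    refine ⟨i₀, Finset.univ.image (fun j : Fin t => e (⟨[], by simp⟩, j)),
      fun v hv => hi₀ v hv, ?_, ?_,
      fun j => e (⟨[], by simp⟩, j), fun j => Walk.nil, fun j => Walk.IsPath.nil,
      fun j => hi₀ _ (Finset.mem_image_of_mem _ (Finset.mem_univ j)), ?_, ?_⟩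
    · intro v hv
      obtain ⟨j, -, rfl⟩ := Finset.mem_image.mp (Finset.mem_coe.mp hv)
      exact Set.mem_range_self _
    · rw [Finset.card_image_of_injective _ hinj, Finset.card_univ, Fintype.card_fin]
      omega
    · intro j v hv
      rw [Walk.support_nil] at hv
      simp only [List.mem_singleton] at hv
      exact hv ▸ Set.mem_range_self _
    · intro j j' hjj v hv hv'
      rw [Walk.support_nil] at hv hv'
      simp only [List.mem_singleton] at hv hv'
      exact hjj (hinj (hv.symm.trans hv'))
  | succ h ih =>
    intro V G e he hedge1 hedge2 P
    classical
    -- apply the inductive hypothesis to the three child subtrees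
    have IHall : ∀ b : Fin 3,
        ∃ i : Fin P.n, ∃ S : Finset V,
        S ⊆ P.bag i ∧ (↑S : Set V) ⊆ Set.range (e ∘ appEmb h t b) ∧ t * (h + 1) ≤ S.card ∧
        ∃ (w : Fin t → V)
          (p : ∀ j : Fin t, G.Walk ((e ∘ appEmb h t b) (⟨[], by simp⟩, j)) (w j)),
          (∀ j, (p j).IsPath) ∧ (∀ j, w j ∈ P.bag i) ∧
          (∀ j, ∀ v ∈ (p j).support, v ∈ Set.range (e ∘ appEmb h t b)) ∧
          (∀ j j', j ≠ j' → ∀ v, v ∈ (p j).support → v ∉ (p j').support) := by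
      intro b
      refine ih G (e ∘ appEmb h t b) (he.comp (appEmb_inj h t b)) ?_ ?_ P
      · intro x j j' hjj
        exact hedge1 _ j j' hjj
      · intro x y hxy
        obtain ⟨σ, hσ⟩ := hedge2 _ _ (ctt_adj_append hxy b)
        exact ⟨σ, hσ⟩
    choose I S hSbag hSrange hScard w₀ p₀ hp₀path hp₀bag hp₀range hp₀disj using IHall
    -- common bag for the root clique
    have hrinj : Function.Injective (fun j : Fin t => e (⟨[], by simp⟩, j)) := by
      intro j j' hjj
      have := he hjj
      simpa using this
    obtain ⟨i₀, hi₀⟩ := clique_bag P (Finset.univ.image (fun j : Fin t => e (⟨[], by simp⟩, j)))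
      ⟨_, Finset.mem_image_of_mem _ (Finset.mem_univ (⟨0, ht⟩ : Fin t))⟩
      (by
        intro u hu v hv huv
        obtain ⟨j, -, rfl⟩ := Finset.mem_image.mp hu
        obtain ⟨j', -, rfl⟩ := Finset.mem_image.mp hv
        exact hedge1 _ j j' (fun hc => huv (by rw [hc])))
    have hi₀' : ∀ j : Fin t, e (⟨[], by simp⟩, j) ∈ P.bag i₀ :=
      fun j => hi₀ _ (Finset.mem_image_of_mem _ (Finset.mem_univ j))
    -- choose the median child m and the far-side child s
    obtain ⟨m, s, hms, hside⟩ := med3 i₀.val (fun b => (I b).val)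
    -- matching between root clique and clique of child s
    obtain ⟨σ, hσ⟩ := hedge2 (⟨[], by simp⟩ : {l : List (Fin 3) // l.length ≤ h + 1})
      ⟨[s], by simp⟩ (ctt_adj_root_child h s)
    -- the composed walks from the root clique through child s
    have hstart : ∀ (j k : Fin t),
        e (⟨[], by simp⟩, j) ∉ (p₀ s k).support := by
      intro j k hc
      obtain ⟨⟨⟨l, hl⟩, k'⟩, hk⟩ := hp₀range s k _ hc
      have := he hk
      simp only [appEmb, Prod.mk.injEq, Subtype.mk.injEq] at this
      exact absurd this.1.symm (by simp)
    let q : ∀ j : Fin t, G.Walk (e (⟨[], by simp⟩, j)) (w₀ s (σ j)) :=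
      fun j => Walk.cons (hσ j) (p₀ s (σ j))
    have hqpath : ∀ j, (q j).IsPath :=
      fun j => Walk.IsPath.cons (hp₀path s (σ j)) (hstart j (σ j))
    have hqsupp : ∀ j, (q j).support = e (⟨[], by simp⟩, j) :: (p₀ s (σ j)).support :=
      fun j => Walk.support_cons _ _
    have hqrange : ∀ j, ∀ v ∈ (q j).support, v ∈ Set.range e := by
      intro j v hv
      rw [hqsupp j] at hv
      rcases List.mem_cons.mp hv with rfl | hv
      · exact Set.mem_range_self _
      · obtain ⟨x, hx⟩ := hp₀range s (σ j) v hv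
        exact ⟨_, hx⟩
    have hqdisj : ∀ j j', j ≠ j' → ∀ v, v ∈ (q j).support → v ∉ (q j').support := by
      intro j j' hjj v hv hv'
      rw [hqsupp j] at hv
      rw [hqsupp j'] at hv'
      rcases List.mem_cons.mp hv with rfl | hv
      · rcases List.mem_cons.mp hv' with heq | hv'
        · exact hjj (hrinj heq)
        · exact hstart j (σ j') hv'
      · rcases List.mem_cons.mp hv' with heq | hv'
        · exact hstart j' (σ j) (heq ▸ hv)
        · exact hp₀disj s (σ j) (σ j') (fun hc => hjj (σ.injective hc)) v hv hv'
    -- each q j crosses the bag I m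
    have hcross : ∀ j : Fin t, ∃ v, v ∈ (q j).support ∧ v ∈ P.bag (I m) := by
      intro j
      rcases hside with ⟨ha, hb⟩ | ⟨ha, hb⟩
      · obtain ⟨v, hv1, hv2⟩ := bag_cross P (I m) (q j) i₀ (I s) ha hb
          (hi₀' j) (hp₀bag s (σ j))
        exact ⟨v, hv1, hv2⟩
      · obtain ⟨v, hv1, hv2⟩ := bag_cross P (I m) ((q j).reverse) (I s) i₀ ha hb
          (hp₀bag s (σ j)) (hi₀' j)
        exact ⟨v, by simpa using hv1, hv2⟩
    choose w' hw'supp hw'bag using hcross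
    -- injectivity of the endpoints
    have hw'inj : Function.Injective w' := by
      intro j j' hjj
      by_contra hne
      exact hqdisj j j' hne (w' j) (hw'supp j) (hjj ▸ hw'supp j')
    -- disjointness of the middle-subtree witness set and the endpoint set
    have hdisjSW : Disjoint (S m) (Finset.univ.image w') := by
      rw [Finset.disjoint_left]
      intro v hvS hvW
      obtain ⟨⟨⟨l, hl⟩, k⟩, hk⟩ := hSrange m (Finset.mem_coe.mpr hvS)
      obtain ⟨j, -, rfl⟩ := Finset.mem_image.mp hvW
      have hv := hw'supp j
      rw [hqsupp j] at hv
      rcases List.mem_cons.mp hv with heq | hv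
      · have := he (hk.trans heq)
        simp only [appEmb, Prod.mk.injEq, Subtype.mk.injEq] at this
        exact absurd this.1 (by simp)
      · obtain ⟨⟨⟨l', hl'⟩, k'⟩, hk'⟩ := hp₀range s (σ j) _ hv
        have := he (hk.trans hk'.symm)
        simp only [appEmb, Prod.mk.injEq, Subtype.mk.injEq] at this
        have h2 := List.append_inj' this.1 rfl
        have : m = s := by simpa using h2.2
        exact hms this
    refine ⟨I m, S m ∪ Finset.univ.image w', ?_, ?_, ?_,
      w', fun j => (q j).takeUntil (w' j) (hw'supp j), ?_, ?_, ?_, ?_⟩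
    · intro v hv
      rcases Finset.mem_union.mp hv with hv | hv
      · exact hSbag m hv
      · obtain ⟨j, -, rfl⟩ := Finset.mem_image.mp hv
        exact hw'bag j
    · intro v hv
      rcases Finset.mem_union.mp (Finset.mem_coe.mp hv) with hv | hv
      · obtain ⟨x, hx⟩ := hSrange m (Finset.mem_coe.mpr hv)
        exact ⟨_, hx⟩
      · obtain ⟨j, -, rfl⟩ := Finset.mem_image.mp hv
        exact hqrange j _ (hw'supp j)
    · rw [Finset.card_union_of_disjoint hdisjSW,
        Finset.card_image_of_injective _ hw'inj, Finset.card_univ, Fintype.card_fin]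
      calc t * (h + 1 + 1) = t * (h + 1) + t := by ring
      _ ≤ (S m).card + t := by exact Nat.add_le_add_right (hScard m) t
    · exact fun j => (hqpath j).takeUntil _
    · exact fun j => hw'bag j
    · intro j v hv
      exact hqrange j v (Walk.support_takeUntil_subset _ _ hv)
    · intro j j' hjj v hv hv'
      exact hqdisj j j' hjj v (Walk.support_takeUntil_subset _ _ hv)
        (Walk.support_takeUntil_subset _ _ hv')

theorem stmt16 (t h : ℕ) (ht : 1 ≤ t)
    (M : ∀ ⦃x y⦄, (CTT h).Adj x y → (Fin t ≃ Fin t))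
    (hM : ∀ ⦃x y⦄ (hxy : (CTT h).Adj x y), M hxy.symm = (M hxy).symm)
    (G : SimpleGraph ({l : List (Fin 3) // l.length ≤ h} × Fin t))
    (hG : ∀ a b, G.Adj a b ↔
      (a.1 = b.1 ∧ a.2 ≠ b.2) ∨ ∃ hxy : (CTT h).Adj a.1 b.1, M hxy a.2 = b.2)
    (P : PathDecomp G) :
    ∃ i : Fin P.n, t * (h + 1) ≤ (P.bag i).card ∧
      ∃ (u w : Fin t → {l : List (Fin 3) // l.length ≤ h} × Fin t)
        (p : ∀ j, G.Walk (u j) (w j)),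
        (∀ j, (p j).IsPath) ∧ (∀ j, (u j).1 = CTTroot h) ∧ (∀ j, w j ∈ P.bag i) ∧
        ∀ j j', j ≠ j' → ∀ v, v ∈ (p j).support → v ∉ (p j').support := by
  obtain ⟨i, S, hS1, hS2, hS3, w, p, hp1, hp2, hp3, hp4⟩ :=
    key t ht h G id Function.injective_id
      (fun x j j' hjj => (hG _ _).mpr (Or.inl ⟨rfl, hjj⟩))
      (fun x y hxy => ⟨M hxy, fun j => (hG _ _).mpr (Or.inr ⟨hxy, rfl⟩)⟩) P
  exact ⟨i, le_trans hS3 (Finset.card_le_card hS1),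
    fun j => (⟨[], by simp⟩, j), w, p, hp1, fun j => rfl, hp2, hp4⟩
end

section
/- Every graph with pathwidth p has treewidth at most p and contains no subdivision of a complete binary tree of height 2p+2 (i.e., any subdivision of a complete binary tree of height h has pathwidth at least ⌈h/2⌉ > p when h ≥ 2p+2). -/
open SimpleGraph

/-! ### Auxiliary lemmas -/

namespace PWAux

open SimpleGraph Walk

lemma pathGraph_isAcyclic (N : ℕ) : (SimpleGraph.pathGraph N).IsAcyclic := by
  classical
  intro v c hc
  have hne : c.support.toFinset.Nonempty := ⟨v, by simp [c.start_mem_support]⟩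
  set m := c.support.toFinset.max' hne with hmdef
  have hmmem : m ∈ c.support := by
    have := c.support.toFinset.max'_mem hne
    simpa using this
  have hmax : ∀ x ∈ c.support, x ≤ m := fun x hx =>
    Finset.le_max' _ x (by simpa using hx)
  have hc' : (c.rotate m hmmem).IsCycle := hc.rotate hmmem
  have hsub : ∀ x ∈ (c.rotate m hmmem).support, x ≤ m := by
    intro x hx
    rw [(c.rotate m hmmem).support_eq_cons] at hx
    rcases List.mem_cons.mp hx with h | h
    · exact h ▸ le_refl m
    · exact hmax x (List.mem_of_mem_tail ((Walk.support_rotate c m hmmem).mem_iff.mp h))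
  set c' := c.rotate m hmmem with hc'def
  clear_value c'
  obtain ⟨a, h, q, hq⟩ := Walk.not_nil_iff.mp hc'.not_nil
  subst hq
  have haLe : a ≤ m := hsub a (by simp [Walk.support_cons, q.start_mem_support])
  have hav : (a : ℕ) + 1 = (m : ℕ) := by
    rcases pathGraph_adj.mp h with h' | h'
    · exfalso; have := Fin.le_def.mp haLe; omega
    · exact h'
  obtain ⟨b, h2, q2, hq2⟩ := (Walk.not_nil_iff (p := q.reverse)).mp (Walk.not_nil_of_ne h.ne)
  have hbmem : b ∈ (Walk.cons h q).support := by
    have : b ∈ q.reverse.support := by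
      rw [hq2]; simp [Walk.support_cons, q2.start_mem_support]
    rw [Walk.support_reverse, List.mem_reverse] at this
    simp [Walk.support_cons, this]
  have hbLe : b ≤ m := hsub b hbmem
  have hba : b = a := by
    rcases pathGraph_adj.mp h2 with h' | h'
    · exfalso; have := Fin.le_def.mp hbLe; omega
    · exact Fin.ext (by omega)
  subst hba
  have hedge : s(m, b) ∈ q.edges := by
    have : s(m, b) ∈ q.reverse.edges := by
      rw [hq2]; simp [Walk.edges_cons]
    rw [Walk.edges_reverse, List.mem_reverse] at this
    exact this
  have hnodup := hc'.isCircuit.isTrail.edges_nodup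
  rw [Walk.edges_cons] at hnodup
  exact (List.nodup_cons.mp hnodup).1 hedge

lemma pathGraph_isTree (N : ℕ) : (SimpleGraph.pathGraph (N + 1)).IsTree :=
  ⟨pathGraph_connected N, pathGraph_isAcyclic _⟩

lemma interval_connected {N : ℕ} (S : Set (Fin N))
    (hS : ∀ a b c : Fin N, a ≤ b → b ≤ c → a ∈ S → c ∈ S → b ∈ S)
    (hne : S.Nonempty) : ((SimpleGraph.pathGraph N).induce S).Connected := by
  haveI : Nonempty S := hne.to_subtype
  refine ⟨?_⟩
  have key : ∀ d : ℕ, ∀ x y : S, (x : Fin N) ≤ (y : Fin N) →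
      (y : Fin N).val - (x : Fin N).val = d →
      ((SimpleGraph.pathGraph N).induce S).Reachable x y := by
    intro d
    induction d with
    | zero =>
      intro x y hxy hd
      have : (x : Fin N) = (y : Fin N) := Fin.ext (by have := Fin.le_def.mp hxy; omega)
      have : x = y := Subtype.ext this
      exact this ▸ Reachable.refl x
    | succ d ih =>
      intro x y hxy hd
      have hlt : ((x : Fin N) : ℕ) < ((y : Fin N) : ℕ) := by
        have := Fin.le_def.mp hxy; omega
      have hmN : ((x : Fin N) : ℕ) + 1 < N := lt_of_le_of_lt hlt (y : Fin N).isLt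
      set mv : Fin N := ⟨((x : Fin N) : ℕ) + 1, hmN⟩ with hmv
      have hmS : mv ∈ S := hS (x : Fin N) mv (y : Fin N)
        (Fin.le_def.mpr (by simp [hmv])) (Fin.le_def.mpr (by simp [hmv]; omega)) x.2 y.2
      have hadj : ((SimpleGraph.pathGraph N).induce S).Adj x ⟨mv, hmS⟩ := by
        simp only [SimpleGraph.comap_adj, Function.Embedding.coe_subtype]
        exact pathGraph_adj.mpr (Or.inl rfl)
      exact hadj.reachable.trans (ih ⟨mv, hmS⟩ y (Fin.le_def.mpr (by simp [hmv]; omega))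
        (by simp [hmv]; omega))
  intro x y
  rcases le_total (x : Fin N) (y : Fin N) with h | h
  · exact key _ x y h rfl
  · exact (key _ y x h rfl).symm

lemma twle_of_pwle {V : Type} (G : SimpleGraph V) (p : ℕ) (hpw : PwLE G p) : TwLE G p := by
  classical
  obtain ⟨P, hP⟩ := hpw
  refine ⟨⟨Fin (P.n + 1), SimpleGraph.pathGraph (P.n + 1), pathGraph_isTree _,
    fun i => if h : (i : ℕ) < P.n then P.bag ⟨i, h⟩ else ∅, ?_, ?_, ?_⟩, ?_⟩
  · intro v
    obtain ⟨i, hi⟩ := P.covers v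
    exact ⟨⟨i.1, Nat.lt_succ_of_lt i.2⟩, by simpa [dif_pos i.2] using hi⟩
  · intro u v huv
    obtain ⟨i, hiu, hiv⟩ := P.coversEdge huv
    exact ⟨⟨i.1, Nat.lt_succ_of_lt i.2⟩, by simpa [dif_pos i.2] using hiu,
      by simpa [dif_pos i.2] using hiv⟩
  · intro v
    apply interval_connected
    · intro a b c' hab hbc haS hcS
      simp only [Set.mem_setOf_eq] at *
      by_cases ha : (a : ℕ) < P.n
      · by_cases hc : (c' : ℕ) < P.n
        · have hb : (b : ℕ) < P.n := lt_of_le_of_lt (Fin.le_def.mp hbc) hc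
          rw [dif_pos ha] at haS
          rw [dif_pos hc] at hcS
          rw [dif_pos hb]
          exact P.consecutive v ⟨a, ha⟩ ⟨b, hb⟩ ⟨c', hc⟩ (Fin.le_def.mp hab)
            (Fin.le_def.mp hbc) haS hcS
        · rw [dif_neg hc] at hcS; exact absurd hcS (Finset.notMem_empty v)
      · rw [dif_neg ha] at haS; exact absurd haS (Finset.notMem_empty v)
    · obtain ⟨i, hi⟩ := P.covers v
      exact ⟨⟨i.1, Nat.lt_succ_of_lt i.2⟩, by simpa [Set.mem_setOf_eq, dif_pos i.2] using hi⟩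
  · intro x
    by_cases hx : (x : ℕ) < P.n
    · simpa [dif_pos hx] using hP ⟨x, hx⟩
    · simp [dif_neg hx]

/-! ### Part 2: pathwidth lower bound for subdivided binary trees -/

section Part2

variable {V : Type} {G : SimpleGraph V} {H : ℕ}

abbrev Nd (H : ℕ) : Type := {l : List Bool // l.length ≤ H}

/-- Vertices used by the subdivision copy inside the subtree rooted at `t`. -/
def SS (c : SubdivCopy (CBT H) G) (t : Nd H) : Set V :=
  {v | (∃ x : Nd H, t.1 <:+ x.1 ∧ v = c.φ x) ∨
    ∃ x y : Nd H, ∃ h : (CBT H).Adj x y, t.1 <:+ x.1 ∧ t.1 <:+ y.1 ∧ v ∈ (c.path h).support}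

lemma suffix_suffix_eq {t₁ t₂ L : List Bool} (h1 : t₁ <:+ L) (h2 : t₂ <:+ L)
    (h : t₁.length = t₂.length) : t₁ = t₂ := by
  obtain ⟨a, ha⟩ := h1
  obtain ⟨b, hb⟩ := h2
  have ha' : t₁ = L.drop a.length := by rw [← ha, List.drop_left]
  have hb' : t₂ = L.drop b.length := by rw [← hb, List.drop_left]
  have hlen : a.length = b.length := by
    have h1 := congrArg List.length ha
    have h2 := congrArg List.length hb
    simp only [List.length_append] at h1 h2
    omega
  rw [ha', hb', hlen]

lemma no_two_subtrees {t₁ t₂ : Nd H} (hlen : t₁.1.length = t₂.1.length) (hne : t₁ ≠ t₂)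
    {L : List Bool} (h1 : t₁.1 <:+ L) (h2 : t₂.1 <:+ L) : False :=
  hne (Subtype.ext (suffix_suffix_eq h1 h2 hlen))

lemma SS_disj (c : SubdivCopy (CBT H) G) {t₁ t₂ : Nd H}
    (hlen : t₁.1.length = t₂.1.length) (hne : t₁ ≠ t₂) :
    ∀ v, v ∈ SS c t₁ → v ∈ SS c t₂ → False := by
  intro v hv1 hv2
  rcases hv1 with ⟨x, hx, rfl⟩ | ⟨x, y, h, hx, hy, hv⟩
  · rcases hv2 with ⟨x', hx', he⟩ | ⟨x', y', h', hx', hy', hv'⟩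
    · have hxx : x = x' := c.inj he
      exact no_two_subtrees hlen hne hx (hxx ▸ hx')
    · rcases c.branch h' x hv' with rfl | rfl
      · exact no_two_subtrees hlen hne hx hx'
      · exact no_two_subtrees hlen hne hx hy'
  · rcases hv2 with ⟨x', hx', rfl⟩ | ⟨x', y', h', hx', hy', hv'⟩
    · rcases c.branch h x' hv with rfl | rfl
      · exact no_two_subtrees hlen hne hx hx'
      · exact no_two_subtrees hlen hne hy hx'
    · by_cases hset : ({x, y} : Set (Nd H)) = {x', y'}
      · have hxmem : x ∈ ({x', y'} : Set (Nd H)) := by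
          rw [← hset]; exact Set.mem_insert x {y}
        rcases hxmem with rfl | hxy'
        · exact no_two_subtrees hlen hne hx hx'
        · exact no_two_subtrees hlen hne hx (hxy' ▸ hy')
      · obtain ⟨z, hz, hzv⟩ := c.disj h h' hset v hv hv'
        have hz2 : t₂.1 <:+ z.1 := by
          rcases hz.2 with rfl | hzy'
          · exact hx'
          · exact hzy' ▸ hy'
        rcases hz.1 with rfl | hzy
        · exact no_two_subtrees hlen hne hx hz2
        · exact no_two_subtrees hlen hne (hzy ▸ hy) hz2

lemma SS_mono (c : SubdivCopy (CBT H) G) {t u : Nd H} (h : t.1 <:+ u.1) :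
    SS c u ⊆ SS c t := by
  rintro v (⟨x, hx, rfl⟩ | ⟨x, y, hh, hx, hy, hv⟩)
  · exact Or.inl ⟨x, h.trans hx, rfl⟩
  · exact Or.inr ⟨x, y, hh, h.trans hx, h.trans hy, hv⟩

lemma phi_mem_SS (c : SubdivCopy (CBT H) G) (t : Nd H) : c.φ t ∈ SS c t :=
  Or.inl ⟨t, List.suffix_refl _, rfl⟩

lemma cbt_adj_cons (x : Nd H) (b : Bool) (hlen : x.1.length + 1 ≤ H) :
    (CBT H).Adj x ⟨b :: x.1, hlen⟩ := by
  rw [CBT, SimpleGraph.fromRel_adj]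
  refine ⟨?_, Or.inl ⟨b, rfl⟩⟩
  intro hEq
  have := congrArg (fun z : Nd H => z.1.length) hEq
  simp at this

lemma walk_to_root (c : SubdivCopy (CBT H) G) (t : Nd H) :
    ∀ (u : List Bool) (x : Nd H), u ++ t.1 = x.1 →
    ∃ w : G.Walk (c.φ x) (c.φ t), ∀ v ∈ w.support, v ∈ SS c t := by
  intro u
  induction u with
  | nil =>
    intro x hx
    have hxt : x = t := by
      apply Subtype.ext
      simp only [List.nil_append] at hx
      exact hx.symm
    subst hxt
    exact ⟨Walk.nil, by
      intro v hv
      simp only [Walk.support_nil, List.mem_singleton] at hv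
      subst hv
      exact phi_mem_SS c x⟩
  | cons b u ih =>
    intro x hx
    have hxval : x.1 = b :: (u ++ t.1) := by rw [← hx]; rfl
    have hxlen : (u ++ t.1).length + 1 ≤ H := by
      have := x.2
      rw [hxval] at this
      simpa using this
    set x' : Nd H := ⟨u ++ t.1, le_trans (Nat.le_succ _) hxlen⟩ with hx'def
    have hadj : (CBT H).Adj x' x := by
      have := cbt_adj_cons x' b hxlen
      convert this using 1
      exact Subtype.ext hxval
    obtain ⟨w', hw'⟩ := ih x' rfl
    refine ⟨(c.path hadj).reverse.append w', ?_⟩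
    intro v hv
    rw [Walk.mem_support_append_iff] at hv
    rcases hv with hv | hv
    · rw [Walk.support_reverse, List.mem_reverse] at hv
      exact Or.inr ⟨x', x, hadj, ⟨u, rfl⟩, ⟨b :: u, hx⟩, hv⟩
    · exact hw' v hv

lemma walk_from_mem (c : SubdivCopy (CBT H) G) (t : Nd H) (v : V) (hv : v ∈ SS c t) :
    ∃ w : G.Walk v (c.φ t), ∀ z ∈ w.support, z ∈ SS c t := by
  classical
  rcases hv with ⟨x, hx, rfl⟩ | ⟨x, y, h, hx, hy, hv⟩
  · obtain ⟨u, hu⟩ := hx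
    exact walk_to_root c t u x hu
  · obtain ⟨u, hu⟩ := hx
    obtain ⟨w', hw'⟩ := walk_to_root c t u x hu
    refine ⟨((c.path h).takeUntil v hv).reverse.append w', ?_⟩
    intro z hz
    rw [Walk.mem_support_append_iff] at hz
    rcases hz with hz | hz
    · rw [Walk.support_reverse, List.mem_reverse] at hz
      exact Or.inr ⟨x, y, h, ⟨u, hu⟩, hy, Walk.support_takeUntil_subset _ hv hz⟩
    · exact hw' z hz

lemma path_avoid (c : SubdivCopy (CBT H) G) {x y : Nd H} (h : (CBT H).Adj x y) (g : Nd H)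
    (hgx : ¬ g.1 <:+ x.1) (hgy : ¬ g.1 <:+ y.1) :
    ∀ v ∈ (c.path h).support, v ∉ SS c g := by
  intro v hv hvg
  rcases hvg with ⟨z, hz, rfl⟩ | ⟨x', y', h', hx', hy', hv'⟩
  · rcases c.branch h z hv with rfl | rfl
    · exact hgx hz
    · exact hgy hz
  · by_cases hset : ({x, y} : Set (Nd H)) = {x', y'}
    · have hxmem : x ∈ ({x', y'} : Set (Nd H)) := by
        rw [← hset]; exact Set.mem_insert x {y}
      rcases hxmem with rfl | hxy'
      · exact hgx hx'
      · exact hgx (hxy' ▸ hy')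
    · obtain ⟨z, hz, hzv⟩ := c.disj h h' hset v hv hv'
      have hz2 : g.1 <:+ z.1 := by
        rcases hz.2 with rfl | hzy'
        · exact hx'
        · exact hzy' ▸ hy'
      rcases hz.1 with rfl | hzy
      · exact hgx hz2
      · exact hgy (hzy ▸ hz2)

lemma separator {P : PathDecomp G} {k : Fin P.n} :
    ∀ {u w : V} (p : G.Walk u w) {i j : Fin P.n}, i ≤ k → k ≤ j →
    u ∈ P.bag i → w ∈ P.bag j →
    ∃ v ∈ p.support, v ∈ P.bag k := by
  intro u w p
  induction p with
  | nil =>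
    intro i j hik hkj hu hw
    exact ⟨_, Walk.start_mem_support _, P.consecutive _ i k j hik hkj hu hw⟩
  | @cons a b w' h q ih =>
    intro i j hik hkj hu hw
    by_cases hak : a ∈ P.bag k
    · exact ⟨a, Walk.start_mem_support _, hak⟩
    · obtain ⟨l, hal, hbl⟩ := P.coversEdge h
      have hlk : l ≤ k := by
        rcases le_total l k with h' | h'
        · exact h'
        · exact absurd (P.consecutive a i k l hik h' hu hal) hak
      obtain ⟨v, hv, hvk⟩ := ih hlk hkj hbl hw
      exact ⟨v, by rw [Walk.support_cons]; exact List.mem_cons_of_mem _ hv, hvk⟩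

/-- A grandchild of `t`. -/
def gcn (t : Nd H) (hlen : t.1.length + 2 ≤ H) (b1 b0 : Bool) : Nd H :=
  ⟨b1 :: b0 :: t.1, by simp; omega⟩

lemma t_suffix_gcn (t : Nd H) (hlen : t.1.length + 2 ≤ H) (b1 b0 : Bool) :
    t.1 <:+ (gcn t hlen b1 b0).1 := ⟨[b1, b0], rfl⟩

lemma gcn_ne (t : Nd H) (hlen : t.1.length + 2 ≤ H) {a1 a0 b1 b0 : Bool}
    (hne : (a1, a0) ≠ (b1, b0)) : gcn t hlen a1 a0 ≠ gcn t hlen b1 b0 := by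
  intro hEq
  apply hne
  have := congrArg Subtype.val hEq
  simp only [gcn, List.cons.injEq] at this
  simp [this.1, this.2.1]

lemma not_suffix_gcn_short (t : Nd H) (hlen : t.1.length + 2 ≤ H) (b1 b0 : Bool)
    {L : List Bool} (hL : L.length < t.1.length + 2) : ¬ (gcn t hlen b1 b0).1 <:+ L := by
  intro hs
  have := hs.length_le
  simp only [gcn, List.length_cons] at this
  omega

lemma not_suffix_gcn_other (t : Nd H) (hlen : t.1.length + 2 ≤ H) {a1 a0 b1 b0 : Bool}
    (hne : (b1, b0) ≠ (a1, a0)) : ¬ (gcn t hlen b1 b0).1 <:+ (gcn t hlen a1 a0).1 := by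
  intro hs
  have := hs.eq_of_length (by simp [gcn])
  simp only [gcn, List.cons.injEq] at this
  exact hne (by simp [this.1, this.2.1])

lemma grandlink (c : SubdivCopy (CBT H) G) (t : Nd H) (hlen : t.1.length + 2 ≤ H)
    (a1 a0 d1 d0 b1 b0 : Bool) (hba : (b1, b0) ≠ (a1, a0)) (hbd : (b1, b0) ≠ (d1, d0)) :
    ∃ w : G.Walk (c.φ (gcn t hlen a1 a0)) (c.φ (gcn t hlen d1 d0)),
      ∀ v ∈ w.support, v ∈ SS c t ∧ v ∉ SS c (gcn t hlen b1 b0) := by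
  have hlt : t.1.length + 1 ≤ H := by omega
  set pa : Nd H := ⟨a0 :: t.1, by simpa using hlt⟩ with hpa
  set pd : Nd H := ⟨d0 :: t.1, by simpa using hlt⟩ with hpd
  have h1 : (CBT H).Adj t pa := cbt_adj_cons t a0 (by simpa using hlt)
  have h3 : (CBT H).Adj t pd := cbt_adj_cons t d0 (by simpa using hlt)
  have h2 : (CBT H).Adj pa (gcn t hlen a1 a0) := by
    have := cbt_adj_cons pa a1 (by simp [hpa]; omega)
    convert this using 1
    exact Subtype.ext rfl
  have h4 : (CBT H).Adj pd (gcn t hlen d1 d0) := by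
    have := cbt_adj_cons pd d1 (by simp [hpd]; omega)
    convert this using 1
    exact Subtype.ext rfl
  refine ⟨((c.path h1).append (c.path h2)).reverse.append
    ((c.path h3).append (c.path h4)), ?_⟩
  have hsufft : t.1 <:+ t.1 := List.suffix_refl _
  have hsuffpa : t.1 <:+ pa.1 := List.suffix_cons a0 t.1
  have hsuffpd : t.1 <:+ pd.1 := List.suffix_cons d0 t.1
  have hnt : ¬ (gcn t hlen b1 b0).1 <:+ t.1 :=
    not_suffix_gcn_short t hlen b1 b0 (by omega)
  have hnpa : ¬ (gcn t hlen b1 b0).1 <:+ pa.1 :=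
    not_suffix_gcn_short t hlen b1 b0 (by simp [hpa])
  have hnpd : ¬ (gcn t hlen b1 b0).1 <:+ pd.1 :=
    not_suffix_gcn_short t hlen b1 b0 (by simp [hpd])
  have hnga : ¬ (gcn t hlen b1 b0).1 <:+ (gcn t hlen a1 a0).1 :=
    not_suffix_gcn_other t hlen hba
  have hngd : ¬ (gcn t hlen b1 b0).1 <:+ (gcn t hlen d1 d0).1 :=
    not_suffix_gcn_other t hlen hbd
  intro v hv
  rw [Walk.mem_support_append_iff] at hv
  rcases hv with hv | hv
  · rw [Walk.support_reverse, List.mem_reverse, Walk.mem_support_append_iff] at hv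
    rcases hv with hv | hv
    · exact ⟨Or.inr ⟨t, pa, h1, hsufft, hsuffpa, hv⟩, path_avoid c h1 _ hnt hnpa v hv⟩
    · exact ⟨Or.inr ⟨pa, gcn t hlen a1 a0, h2, hsuffpa, t_suffix_gcn t hlen a1 a0, hv⟩,
        path_avoid c h2 _ hnpa hnga v hv⟩
  · rw [Walk.mem_support_append_iff] at hv
    rcases hv with hv | hv
    · exact ⟨Or.inr ⟨t, pd, h3, hsufft, hsuffpd, hv⟩, path_avoid c h3 _ hnt hnpd v hv⟩
    · exact ⟨Or.inr ⟨pd, gcn t hlen d1 d0, h4, hsuffpd, t_suffix_gcn t hlen d1 d0, hv⟩,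
        path_avoid c h4 _ hnpd hngd v hv⟩

lemma clash (c : SubdivCopy (CBT H) G) (t : Nd H) (hlen : t.1.length + 2 ≤ H)
    {P : PathDecomp G} (a1 a0 m1 m0 d1 d0 : Bool)
    (hma : (m1, m0) ≠ (a1, a0)) (hmd : (m1, m0) ≠ (d1, d0))
    {ia im idx : Fin P.n} (hia : ia ≤ im) (hid : im ≤ idx)
    {u w : V} (hu : u ∈ P.bag ia) (hua : u ∈ SS c (gcn t hlen a1 a0))
    (hw : w ∈ P.bag idx) (hwd : w ∈ SS c (gcn t hlen d1 d0))
    (hmid : ∀ v, v ∈ P.bag im → v ∈ SS c t → v ∈ SS c (gcn t hlen m1 m0)) : False := by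
  obtain ⟨w1, hw1⟩ := walk_from_mem c _ u hua
  obtain ⟨w3, hw3⟩ := walk_from_mem c _ w hwd
  obtain ⟨w2, hw2⟩ := grandlink c t hlen a1 a0 d1 d0 m1 m0 hma hmd
  obtain ⟨v, hv, hvk⟩ := separator (w1.append (w2.append w3.reverse)) hia hid hu hw
  rw [Walk.mem_support_append_iff, Walk.mem_support_append_iff] at hv
  have hvtm : v ∈ SS c t ∧ v ∉ SS c (gcn t hlen m1 m0) := by
    rcases hv with hv | hv | hv
    · have hva := hw1 v hv
      refine ⟨SS_mono c (t_suffix_gcn t hlen a1 a0) hva, fun hm => ?_⟩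
      exact SS_disj c (by simp [gcn]) (gcn_ne t hlen (Ne.symm hma)) v hva hm
    · exact hw2 v hv
    · rw [Walk.support_reverse, List.mem_reverse] at hv
      have hvd := hw3 v hv
      refine ⟨SS_mono c (t_suffix_gcn t hlen d1 d0) hvd, fun hm => ?_⟩
      exact SS_disj c (by simp [gcn]) (gcn_ne t hlen (Ne.symm hmd)) v hvd hm
  exact hvtm.2 (hmid v hvk hvtm.1)

open scoped Classical in
lemma bigbag (c : SubdivCopy (CBT H) G) (P : PathDecomp G) :
    ∀ (k : ℕ) (t : Nd H), t.1.length + 2 * k ≤ H →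
    ∃ i, k + 1 ≤ ((P.bag i).filter (· ∈ SS c t)).card := by
  intro k
  induction k with
  | zero =>
    intro t ht
    obtain ⟨i, hi⟩ := P.covers (c.φ t)
    exact ⟨i, Finset.card_pos.mpr ⟨c.φ t, Finset.mem_filter.mpr ⟨hi, phi_mem_SS c t⟩⟩⟩
  | succ k ih =>
    intro t ht
    have hlen2 : t.1.length + 2 ≤ H := by omega
    have hg : ∀ b1 b0 : Bool, (gcn t hlen2 b1 b0).1.length + 2 * k ≤ H := by
      intro b1 b0; simp only [gcn, List.length_cons]; omega
    obtain ⟨i₁, hi₁⟩ := ih (gcn t hlen2 false false) (hg false false)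
    obtain ⟨i₂, hi₂⟩ := ih (gcn t hlen2 true false) (hg true false)
    obtain ⟨i₃, hi₃⟩ := ih (gcn t hlen2 false true) (hg false true)
    by_contra hcon
    push_neg at hcon
    have hcon' : ∀ i, ((P.bag i).filter (· ∈ SS c t)).card ≤ k + 1 := by
      intro i; have := hcon i; omega
    have key : ∀ (b1 b0 : Bool) (i : Fin P.n),
        k + 1 ≤ ((P.bag i).filter (· ∈ SS c (gcn t hlen2 b1 b0))).card →
        ∀ v, v ∈ P.bag i → v ∈ SS c t → v ∈ SS c (gcn t hlen2 b1 b0) := by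
      intro b1 b0 i hcard v hvb hvt
      have hsub : (P.bag i).filter (· ∈ SS c (gcn t hlen2 b1 b0)) ⊆
          (P.bag i).filter (· ∈ SS c t) :=
        Finset.monotone_filter_right _ (fun x _ hx => SS_mono c (t_suffix_gcn t hlen2 b1 b0) hx)
      have heq := Finset.eq_of_subset_of_card_le hsub (le_trans (hcon' i) hcard)
      have : v ∈ (P.bag i).filter (· ∈ SS c (gcn t hlen2 b1 b0)) := by
        rw [heq]; exact Finset.mem_filter.mpr ⟨hvb, hvt⟩
      exact (Finset.mem_filter.mp this).2
    have ex : ∀ (b1 b0 : Bool) (i : Fin P.n),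
        k + 1 ≤ ((P.bag i).filter (· ∈ SS c (gcn t hlen2 b1 b0))).card →
        ∃ u, u ∈ P.bag i ∧ u ∈ SS c (gcn t hlen2 b1 b0) := by
      intro b1 b0 i hcard
      have : ((P.bag i).filter (· ∈ SS c (gcn t hlen2 b1 b0))).Nonempty :=
        Finset.card_pos.mp (by omega)
      obtain ⟨u, hu⟩ := this
      exact ⟨u, (Finset.mem_filter.mp hu).1, (Finset.mem_filter.mp hu).2⟩
    have run : ∀ (a1 a0 m1 m0 d1 d0 : Bool) (ia im idx : Fin P.n),
        (m1, m0) ≠ (a1, a0) → (m1, m0) ≠ (d1, d0) → ia ≤ im → im ≤ idx →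
        k + 1 ≤ ((P.bag ia).filter (· ∈ SS c (gcn t hlen2 a1 a0))).card →
        k + 1 ≤ ((P.bag im).filter (· ∈ SS c (gcn t hlen2 m1 m0))).card →
        k + 1 ≤ ((P.bag idx).filter (· ∈ SS c (gcn t hlen2 d1 d0))).card → False := by
      intro a1 a0 m1 m0 d1 d0 ia im idx hma hmd h1 h2 hca hcm hcd
      obtain ⟨u, hub, hua⟩ := ex a1 a0 ia hca
      obtain ⟨w, hwb, hwd⟩ := ex d1 d0 idx hcd
      exact clash c t hlen2 a1 a0 m1 m0 d1 d0 hma hmd h1 h2 hub hua hwb hwd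
        (key m1 m0 im hcm)
    rcases le_total i₁ i₂ with h12 | h12
    · rcases le_total i₂ i₃ with h23 | h23
      · exact run false false true false false true i₁ i₂ i₃ (by decide) (by decide)
          h12 h23 hi₁ hi₂ hi₃
      · rcases le_total i₁ i₃ with h13 | h13
        · exact run false false false true true false i₁ i₃ i₂ (by decide) (by decide)
            h13 h23 hi₁ hi₃ hi₂
        · exact run false true false false true false i₃ i₁ i₂ (by decide) (by decide)
            h13 h12 hi₃ hi₁ hi₂
    · rcases le_total i₁ i₃ with h13 | h13
      · exact run true false false false false true i₂ i₁ i₃ (by decide) (by decide)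
          h12 h13 hi₂ hi₁ hi₃
      · rcases le_total i₂ i₃ with h23 | h23
        · exact run true false false true false false i₂ i₃ i₁ (by decide) (by decide)
            h23 h13 hi₂ hi₃ hi₁
        · exact run false true true false false false i₃ i₂ i₁ (by decide) (by decide)
            h23 h12 hi₃ hi₂ hi₁

end Part2

end PWAux

theorem stmt19 {V : Type} [Fintype V] (G : SimpleGraph V) (p : ℕ) (hpw : PwLE G p) :
    TwLE G p ∧ ¬ ContainsSubdiv (CBT (2 * p + 2)) G := by
  classical
  obtain ⟨P, hP⟩ := hpw
  refine ⟨PWAux.twle_of_pwle G p ⟨P, hP⟩, ?_⟩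
  rintro ⟨c⟩
  obtain ⟨i, hi⟩ := PWAux.bigbag c P (p + 1) ⟨[], by simp⟩ (by simp; omega)
  have h3 : p + 1 + 1 ≤ (P.bag i).card := le_trans hi (Finset.card_filter_le _ _)
  have h4 := hP i
  omega
end
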